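/- arXiv:1603.03161 — 7 statements merged into one kernel-verified Lean document; each statement's English description precedes it below -/
import Mathlib

section
/- Let U2 be any 2-dimensional subspace of W̄. Then λ̄ annihilates U2 (i.e. λ̄(u,u',w) = 0 for all u,u' ∈ U2 and all w ∈ W̄) if and only if U2 ∩ A1 ≠ 0 and U2 ∩ A2 ≠ 0; in that case both intersections are 1-dimensional and U2 = (U2 ∩ A1) ⊕ (U2 ∩ A2). (Set-theoretic form of the paper's Lemma on the zero locus of a general 3-form on Gr(2,6): this zero locus is P(A1) × P(A2).) -/
open Module

set_option linter.unusedSectionVars false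

section helpers
variable {k W : Type*} [Field k] [AddCommGroup W] [Module k W]

private lemma upd0 (x y z a : W) : Function.update ![x,y,z] 0 a = ![a,y,z] := by
  funext i; fin_cases i <;> simp
private lemma upd1 (x y z a : W) : Function.update ![x,y,z] 1 a = ![x,a,z] := by
  funext i; fin_cases i <;> simp [Function.update]
private lemma upd2 (x y z a : W) : Function.update ![x,y,z] 2 a = ![x,y,a] := by
  funext i; fin_cases i <;> simp [Function.update]

private lemma tri_add0 (f : AlternatingMap k W k (Fin 3)) (a b y z : W) :
    f ![a+b,y,z] = f ![a,y,z] + f ![b,y,z] := by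
  simpa [upd0] using f.toMultilinearMap.map_update_add ![a,y,z] 0 a b
private lemma tri_add1 (f : AlternatingMap k W k (Fin 3)) (x a b z : W) :
    f ![x,a+b,z] = f ![x,a,z] + f ![x,b,z] := by
  simpa [upd1] using f.toMultilinearMap.map_update_add ![x,a,z] 1 a b
private lemma tri_add2 (f : AlternatingMap k W k (Fin 3)) (x y a b : W) :
    f ![x,y,a+b] = f ![x,y,a] + f ![x,y,b] := by
  simpa [upd2] using f.toMultilinearMap.map_update_add ![x,y,a] 2 a b
private lemma tri_smul0 (f : AlternatingMap k W k (Fin 3)) (c : k) (a y z : W) :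
    f ![c•a,y,z] = c * f ![a,y,z] := by
  simpa [upd0] using f.toMultilinearMap.map_update_smul ![a,y,z] 0 c a
private lemma tri_smul1 (f : AlternatingMap k W k (Fin 3)) (c : k) (x a z : W) :
    f ![x,c•a,z] = c * f ![x,a,z] := by
  simpa [upd1] using f.toMultilinearMap.map_update_smul ![x,a,z] 1 c a

private lemma tri_self (f : AlternatingMap k W k (Fin 3)) (a w : W) : f ![a,a,w] = 0 :=
  f.map_eq_zero_of_eq ![a,a,w] (by simp) (by decide : (0:Fin 3) ≠ 1)

private lemma tri_swap (f : AlternatingMap k W k (Fin 3)) (a b w : W) :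
    f ![b,a,w] = - f ![a,b,w] := by
  have h := f.map_swap ![a,b,w] (by decide : (0:Fin 3) ≠ 1)
  have e : (![a,b,w] ∘ Equiv.swap (0:Fin 3) 1) = ![b,a,w] := by
    funext i; fin_cases i <;> simp [Equiv.swap_apply_of_ne_of_ne]
  rwa [e] at h

private lemma tri_expand (f : AlternatingMap k W k (Fin 3)) (a b w : W) (α β γ δ : k) :
    f ![α•a+β•b, γ•a+δ•b, w] = (α*δ - β*γ) * f ![a,b,w] := by
  simp only [tri_add0, tri_add1, tri_smul0, tri_smul1, tri_self, tri_swap f a b w]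
  ring

private lemma tri_repl0 (f : AlternatingMap k W k (Fin 3)) (A : Submodule k W)
    (hf : ∀ v : Fin 3 → W, (∃ i, v i ∈ A) → f v = 0)
    (x x' y z : W) (h : x - x' ∈ A) : f ![x,y,z] = f ![x',y,z] := by
  have e : f ![x,y,z] = f ![(x - x') + x', y, z] := by rw [sub_add_cancel]
  rw [e, tri_add0, hf ![x-x',y,z] ⟨0, by simpa using h⟩, zero_add]

private lemma tri_repl1 (f : AlternatingMap k W k (Fin 3)) (A : Submodule k W)
    (hf : ∀ v : Fin 3 → W, (∃ i, v i ∈ A) → f v = 0)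
    (x y y' z : W) (h : y - y' ∈ A) : f ![x,y,z] = f ![x,y',z] := by
  have e : f ![x,y,z] = f ![x, (y - y') + y', z] := by rw [sub_add_cancel]
  rw [e, tri_add1, hf ![x,y-y',z] ⟨1, by simpa using h⟩, zero_add]

private lemma tri_repl2 (f : AlternatingMap k W k (Fin 3)) (A : Submodule k W)
    (hf : ∀ v : Fin 3 → W, (∃ i, v i ∈ A) → f v = 0)
    (x y z z' : W) (h : z - z' ∈ A) : f ![x,y,z] = f ![x,y,z'] := by
  have e : f ![x,y,z] = f ![x, y, (z - z') + z'] := by rw [sub_add_cancel]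
  rw [e, tri_add2, hf ![x,y,z-z'] ⟨2, by simpa using h⟩, zero_add]

end helpers

private lemma aux_vanish {k W : Type*} [Field k] [AddCommGroup W] [Module k W]
    [FiniteDimensional k W]
    (A B : Submodule k W) (hc : IsCompl B A) (hB : finrank k B = 3)
    (f g : AlternatingMap k W k (Fin 3))
    (hf : ∀ v : Fin 3 → W, (∃ i, v i ∈ A) → f v = 0)
    (hg : ∀ v : Fin 3 → W, (∃ i, v i ∈ B) → g v = 0)
    (U2 : Submodule k W) (hU2 : finrank k U2 = 2)
    (H : ∀ u ∈ U2, ∀ u' ∈ U2, ∀ w : W, f ![u,u',w] + g ![u,u',w] = 0)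
    (hd : U2 ⊓ A = ⊥) : f = 0 := by
  set π := B.projectionOnto A hc with hπ
  have hker : ∀ x : W, π x = 0 ↔ x ∈ A := fun x =>
    Submodule.projectionOnto_apply_eq_zero_iff hc
  have hsub : ∀ x : W, x - ↑(π x) ∈ A := by
    intro x
    rw [← hker, map_sub, Submodule.projectionOnto_apply_left hc (π x), sub_self]
  obtain ⟨Bu⟩ : Nonempty (Basis (Fin 2) k U2) := ⟨finBasisOfFinrankEq k U2 hU2⟩
  set φ : U2 →ₗ[k] B := π.comp U2.subtype with hφ
  have hφinj : LinearMap.ker φ = ⊥ := by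
    rw [LinearMap.ker_eq_bot']
    intro m hm
    have h1 : (m : W) ∈ A := (hker m).1 hm
    have h2 : (m : W) ∈ U2 ⊓ A := ⟨m.2, h1⟩
    rw [hd] at h2
    exact Subtype.ext (by simpa using h2)
  set u : W := ↑(Bu 0) with hu
  set u' : W := ↑(Bu 1) with hu'
  have hum : u ∈ U2 := (Bu 0).2
  have hu'm : u' ∈ U2 := (Bu 1).2
  set b0 := π u with hb0
  set b1 := π u' with hb1
  have li2 : LinearIndependent k ![b0, b1] := by
    have e : ![b0,b1] = φ ∘ ⇑Bu := by funext i; fin_cases i <;> rfl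
    rw [e]; exact Bu.linearIndependent.map' φ hφinj
  obtain ⟨z, hz⟩ : ∃ z : B, z ∉ Submodule.span k (Set.range ![b0,b1]) := by
    by_contra h
    push_neg at h
    have hT := Submodule.eq_top_iff'.2 h
    have h3 := finrank_span_eq_card li2
    rw [hT, finrank_top] at h3
    simp [hB] at h3
  have li3 : LinearIndependent k ![b0,b1,z] := by
    have e : ![b0,b1,z] = Fin.snoc ![b0,b1] z := by
      funext i; fin_cases i <;> rfl
    rw [e, linearIndependent_fin_snoc]
    exact ⟨li2, hz⟩
  set e := basisOfLinearIndependentOfCardEqFinrank li3 (by simp [hB]) with he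
  have hcoe : ⇑e = ![b0,b1,z] := coe_basisOfLinearIndependentOfCardEqFinrank li3 _
  set μ := f.compLinearMap B.subtype with hμdef
  have hμe : μ ⇑e = 0 := by
    rw [hcoe]
    show f (B.subtype ∘ ![b0,b1,z]) = 0
    have e2 : B.subtype ∘ ![b0,b1,z] = ![(b0:W),(b1:W),(z:W)] := by
      funext i; fin_cases i <;> rfl
    rw [e2]
    rw [← tri_repl0 f A hf u ↑b0 ↑b1 ↑z (hb0 ▸ hsub u),
        ← tri_repl1 f A hf u u' ↑b1 ↑z (hb1 ▸ hsub u')]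
    have hgz : g ![u,u',↑z] = 0 := hg _ ⟨2, by simpa using z.2⟩
    have h5 := H u hum u' hu'm ↑z
    linear_combination h5 - hgz
  have hμ0 : μ = 0 := by
    rw [μ.eq_smul_basis_det e, hμe, zero_smul]
  ext v
  have hv : f v = f ![v 0, v 1, v 2] := by
    congr 1; funext i; fin_cases i <;> rfl
  rw [hv,
      tri_repl0 f A hf (v 0) ↑(π (v 0)) _ _ (hsub _),
      tri_repl1 f A hf _ (v 1) ↑(π (v 1)) _ (hsub _),
      tri_repl2 f A hf _ _ (v 2) ↑(π (v 2)) (hsub _)]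
  have h4 : f ![↑(π (v 0)), ↑(π (v 1)), ↑(π (v 2))] = μ ![π (v 0), π (v 1), π (v 2)] := by
    show _ = f (B.subtype ∘ _)
    congr 1
    funext i; fin_cases i <;> rfl
  rw [h4, hμ0]
  simp

/-- For a general 3-form `λ̄ = λ̄1 + λ̄2` on a 6-dimensional space
`W̄ = A1 ⊕ A2`, a 2-dimensional subspace `U2` is annihilated by `λ̄` iff it meets
both `A1` and `A2` nontrivially; in that case both intersections are lines and
`U2 = (U2 ⊓ A1) ⊕ (U2 ⊓ A2)`. -/
theorem stmt_0 (k : Type*) [Field k] [CharZero k]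
    (W : Type*) [AddCommGroup W] [Module k W] [FiniteDimensional k W]
    (hW : finrank k W = 6)
    (A1 A2 : Submodule k W)
    (hA12 : A1 ⊓ A2 = ⊥) (hA12' : A1 ⊔ A2 = ⊤)
    (hA1 : finrank k A1 = 3) (hA2 : finrank k A2 = 3)
    (lam1 lam2 : AlternatingMap k W k (Fin 3))
    (hlam1ne : lam1 ≠ 0) (hlam2ne : lam2 ≠ 0)
    (hlam1 : ∀ v : Fin 3 → W, (∃ i, v i ∈ A1) → lam1 v = 0)
    (hlam2 : ∀ v : Fin 3 → W, (∃ i, v i ∈ A2) → lam2 v = 0)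
    (lam : AlternatingMap k W k (Fin 3)) (hlam : lam = lam1 + lam2)
    (U2 : Submodule k W) (hU2 : finrank k U2 = 2) :
    ((∀ u ∈ U2, ∀ u' ∈ U2, ∀ w : W, lam ![u, u', w] = 0) ↔
      (U2 ⊓ A1 ≠ ⊥ ∧ U2 ⊓ A2 ≠ ⊥)) ∧
    ((∀ u ∈ U2, ∀ u' ∈ U2, ∀ w : W, lam ![u, u', w] = 0) →
      finrank k ↥(U2 ⊓ A1) = 1 ∧ finrank k ↥(U2 ⊓ A2) = 1 ∧
      (U2 ⊓ A1) ⊔ (U2 ⊓ A2) = U2) := by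
  subst hlam
  have hc : IsCompl A1 A2 := ⟨disjoint_iff.mpr hA12, codisjoint_iff.mpr hA12'⟩
  have key : (∀ u ∈ U2, ∀ u' ∈ U2, ∀ w : W, (lam1 + lam2) ![u,u',w] = 0) ↔
      (U2 ⊓ A1 ≠ ⊥ ∧ U2 ⊓ A2 ≠ ⊥) := by
    constructor
    · intro H
      constructor
      · intro hbot
        exact hlam1ne (aux_vanish A1 A2 hc.symm hA2 lam1 lam2 hlam1 hlam2 U2 hU2
          (fun u hu u' hu' w => by simpa using H u hu u' hu' w) hbot)
      · intro hbot
        exact hlam2ne (aux_vanish A2 A1 hc hA1 lam2 lam1 hlam2 hlam1 U2 hU2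
          (fun u hu u' hu' w => by
            have h5 := H u hu u' hu' w
            simp only [AlternatingMap.add_apply] at h5
            linear_combination h5) hbot)
    · rintro ⟨h1, h2⟩ u hu u' hu' w
      obtain ⟨a, ha, ha0⟩ := Submodule.exists_mem_ne_zero_of_ne_bot h1
      obtain ⟨b, hb, hb0⟩ := Submodule.exists_mem_ne_zero_of_ne_bot h2
      have li : LinearIndependent k ![a, b] := by
        rw [LinearIndependent.pair_iff]
        intro s t hst
        have hsa : s • a ∈ A1 ⊓ A2 := by
          refine ⟨A1.smul_mem s ha.2, ?_⟩
          have : s • a = -(t • b) := by linear_combination (norm := abel) hst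
          rw [this]
          exact A2.neg_mem (A2.smul_mem t hb.2)
        rw [hA12] at hsa
        have hs : s = 0 := by
          rcases (by simpa using hsa : s = 0 ∨ a = 0) with h | h
          · exact h
          · exact absurd h ha0
        refine ⟨hs, ?_⟩
        rw [hs, zero_smul, zero_add] at hst
        rcases smul_eq_zero.1 hst with h | h
        · exact h
        · exact absurd h hb0
      have hspan : Submodule.span k (Set.range ![a,b]) = U2 := by
        apply Submodule.eq_of_le_of_finrank_le
        · rw [Submodule.span_le]
          rw [Set.range_subset_iff]
          intro i
          fin_cases i
          · simpa using ha.1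
          · simpa using hb.1
        · rw [hU2, finrank_span_eq_card li]
          simp
      have hrng : Set.range ![a,b] = {a, b} := by
        ext x
        simp [Fin.exists_fin_two, eq_comm]
        tauto
      rw [← hspan, hrng] at hu hu'
      obtain ⟨α, β, hαβ⟩ := Submodule.mem_span_pair.1 hu
      obtain ⟨γ, δ, hγδ⟩ := Submodule.mem_span_pair.1 hu'
      rw [← hαβ, ← hγδ, tri_expand]
      have hz : (lam1 + lam2) ![a, b, w] = 0 := by
        have e1 : lam1 ![a,b,w] = 0 := hlam1 _ ⟨0, by simpa using ha.2⟩
        have e2 : lam2 ![a,b,w] = 0 := hlam2 _ ⟨1, by simpa using hb.2⟩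
        simp [e1, e2]
      rw [hz, mul_zero]
  refine ⟨key, ?_⟩
  intro H
  obtain ⟨h1, h2⟩ := key.1 H
  have hint : (U2 ⊓ A1) ⊓ (U2 ⊓ A2) = ⊥ := by
    rw [eq_bot_iff, ← hA12]
    exact le_inf (inf_le_left.trans inf_le_right) (inf_le_right.trans inf_le_right)
  have hsum := Submodule.finrank_sup_add_finrank_inf_eq (U2 ⊓ A1) (U2 ⊓ A2)
  rw [hint] at hsum
  simp only [finrank_bot, add_zero] at hsum
  have d1 : 1 ≤ finrank k ↥(U2 ⊓ A1) := by
    rw [Nat.one_le_iff_ne_zero]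
    intro h0
    exact h1 (Submodule.finrank_eq_zero.1 h0)
  have d2 : 1 ≤ finrank k ↥(U2 ⊓ A2) := by
    rw [Nat.one_le_iff_ne_zero]
    intro h0
    exact h2 (Submodule.finrank_eq_zero.1 h0)
  have hle : (U2 ⊓ A1) ⊔ (U2 ⊓ A2) ≤ U2 := sup_le inf_le_left inf_le_left
  have hfr : finrank k ↥((U2 ⊓ A1) ⊔ (U2 ⊓ A2)) ≤ 2 := hU2 ▸ Submodule.finrank_mono hle
  refine ⟨by omega, by omega, ?_⟩
  exact Submodule.eq_of_le_of_finrank_le hle (by omega)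
end

section
/- Let Ū4 be any 4-dimensional subspace of W̄. Then Ū4 is isotropic for λ̄ (i.e. λ̄(u1,u2,u3) = 0 for all u1,u2,u3 ∈ Ū4) if and only if dim(Ū4 ∩ A1) = dim(Ū4 ∩ A2) = 2, i.e. Ū4 = (Ū4 ∩ A1) ⊕ (Ū4 ∩ A2) with both summands 2-dimensional. (Set-theoretic form of the paper's Corollary: the zero locus of a general 3-form on Gr(4,6) is Gr(2,A1) × Gr(2,A2).) -/
open Module

section Aux
variable {k W : Type*} [Field k] [AddCommGroup W] [Module k W]

lemma expand_aux (A : Submodule k W) (f : AlternatingMap k W k (Fin 3))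
    (hf : ∀ v : Fin 3 → W, (∃ i, v i ∈ A) → f v = 0)
    (a b : Fin 3 → W) (ha : ∀ i, a i ∈ A) :
    f (fun i => a i + b i) = f b := by
  classical
  have h1 : f (a + b) = ∑ s : Finset (Fin 3), f (s.piecewise a b) :=
    (f : MultilinearMap k (fun _ : Fin 3 => W) k).map_add_univ a b
  have h2 : ∀ s : Finset (Fin 3), s ∈ Finset.univ → s ≠ ∅ → f (s.piecewise a b) = 0 := by
    intro s _ hs
    obtain ⟨i, hi⟩ := Finset.nonempty_iff_ne_empty.2 hs
    exact hf _ ⟨i, by rw [Finset.piecewise_eq_of_mem _ _ _ hi]; exact ha i⟩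
  have h3 : f (a + b) = f ((∅ : Finset (Fin 3)).piecewise a b) := by
    rw [h1]
    exact Finset.sum_eq_single_of_mem ∅ (Finset.mem_univ _) h2
  rw [Finset.piecewise_empty] at h3
  exact h3

end Aux

lemma core_aux (k W : Type*) [Field k] [AddCommGroup W] [Module k W] [FiniteDimensional k W]
    (hW : finrank k W = 6)
    (A1 A2 : Submodule k W) (hcompl : IsCompl A1 A2)
    (hA1 : finrank k A1 = 3) (hA2 : finrank k A2 = 3)
    (lam1 lam2 : AlternatingMap k W k (Fin 3)) (hlam2ne : lam2 ≠ 0)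
    (hlam1 : ∀ v : Fin 3 → W, (∃ i, v i ∈ A1) → lam1 v = 0)
    (hlam2 : ∀ v : Fin 3 → W, (∃ i, v i ∈ A2) → lam2 v = 0)
    (U4 : Submodule k W) (hU4 : finrank k U4 = 4)
    (iso : ∀ u1 ∈ U4, ∀ u2 ∈ U4, ∀ u3 ∈ U4,
      lam1 ![u1, u2, u3] + lam2 ![u1, u2, u3] = 0) :
    2 ≤ finrank k ↥(U4 ⊓ A2) := by
  classical
  set p1 := Submodule.projectionOnto A1 A2 hcompl with hp1
  -- projection representation
  have rep : ∀ v : Fin 3 → W, lam2 v = lam2 (fun i => ↑(p1 (v i))) := by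
    intro v
    have hm : ∀ i, v i - ↑(p1 (v i)) ∈ A2 := by
      intro i
      have h := Submodule.projection_add_projection_eq_self hcompl (v i)
      have h2 : v i - ↑(p1 (v i)) =
          ↑(Submodule.projectionOnto A2 A1 hcompl.symm (v i)) := by
        rw [sub_eq_iff_eq_add, add_comm]; exact h.symm
      rw [h2]; exact SetLike.coe_mem _
    calc lam2 v = lam2 (fun i => (v i - ↑(p1 (v i))) + ↑(p1 (v i))) := by
          congr 1; funext i; rw [sub_add_cancel]
      _ = lam2 (fun i => ↑(p1 (v i))) := expand_aux A2 lam2 hlam2 _ _ hm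
  set g : AlternatingMap k A1 k (Fin 3) := lam2.compLinearMap A1.subtype with hgdef
  have hgapp : ∀ m : Fin 3 → A1, g m = lam2 (fun i => ↑(m i)) := fun m => rfl
  have hgne : g ≠ 0 := by
    intro h0
    apply hlam2ne
    ext v
    rw [rep v]
    have := congrFun (congrArg (fun (f : AlternatingMap k A1 k (Fin 3)) => f.toFun) h0)
      (fun i => p1 (v i))
    simpa [hgapp] using congrArg (fun (f : AlternatingMap k A1 k (Fin 3)) =>
      f (fun i => p1 (v i))) h0
  -- dimension facts
  have hsupinf := Submodule.finrank_sup_add_finrank_inf_eq U4 A1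
  have hle6 : finrank k ↥(U4 ⊔ A1) ≤ 6 := hW ▸ Submodule.finrank_le _
  have d1pos : 1 ≤ finrank k ↥(U4 ⊓ A1) := by omega
  by_contra hcon
  have hd2 : finrank k ↥(U4 ⊓ A2) ≤ 1 := by omega
  -- the restricted projection is surjective
  set q : ↥U4 →ₗ[k] ↥A1 := p1 ∘ₗ U4.subtype with hq
  have hker : LinearMap.ker q = Submodule.comap U4.subtype (U4 ⊓ A2) := by
    ext x
    simp only [LinearMap.mem_ker, hq, LinearMap.comp_apply, Submodule.subtype_apply,
      Submodule.mem_comap, Submodule.mem_inf]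
    rw [Submodule.projectionOnto_apply_eq_zero_iff]
    exact ⟨fun h => ⟨x.2, h⟩, fun h => h.2⟩
  have hkerrank : finrank k ↥(LinearMap.ker q) = finrank k ↥(U4 ⊓ A2) := by
    rw [hker]
    exact (Submodule.comapSubtypeEquivOfLe inf_le_left).finrank_eq
  have hrn := LinearMap.finrank_range_add_finrank_ker q
  rw [hkerrank, hU4] at hrn
  have hrle : finrank k ↥(LinearMap.range q) ≤ 3 := hA1 ▸ Submodule.finrank_le _
  have hrange : LinearMap.range q = ⊤ := by
    apply Submodule.eq_top_of_finrank_eq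
    rw [hA1]; omega
  have hsurj : Function.Surjective q := LinearMap.range_eq_top.1 hrange
  -- nonzero vector in U4 ⊓ A1
  obtain ⟨w, hw, hwne⟩ := Submodule.exists_mem_ne_zero_of_ne_bot
    (p := U4 ⊓ A1) (by
      intro h
      rw [h, finrank_bot] at d1pos
      omega)
  have hwU : w ∈ U4 := hw.1
  have hwA : w ∈ A1 := hw.2
  set w' : ↥A1 := ⟨w, hwA⟩ with hw'
  have hw'ne : w' ≠ 0 := fun h => hwne (by simpa [hw'] using congrArg Subtype.val h)
  -- extend w' to an independent triple in A1
  obtain ⟨C, hC⟩ := Submodule.exists_isCompl (k ∙ w' : Submodule k ↥A1)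
  have hCrank : finrank k ↥C = 2 := by
    have h1 := Submodule.finrank_add_eq_of_isCompl hC
    rw [finrank_span_singleton hw'ne, hA1] at h1
    omega
  set c : Basis (Fin 2) k ↥C := finBasisOfFinrankEq k ↥C hCrank with hc
  have cind : LinearIndependent k (fun i : Fin 2 => (↑(c i) : ↥A1)) :=
    c.linearIndependent.map' C.subtype (Submodule.ker_subtype C)
  have hspan : Submodule.span k (Set.range fun i : Fin 2 => (↑(c i) : ↥A1)) = C := by
    have h1 : (Set.range fun i : Fin 2 => (↑(c i) : ↥A1)) = C.subtype '' Set.range c := by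
      rw [← Set.range_comp]; rfl
    rw [h1, Submodule.span_image, c.span_eq, Submodule.map_top, Submodule.range_subtype]
  have hwnotin : w' ∉ Submodule.span k (Set.range fun i : Fin 2 => (↑(c i) : ↥A1)) := by
    rw [hspan]
    intro hmem
    have h1 : w' ∈ (k ∙ w') ⊓ C := ⟨Submodule.mem_span_singleton_self w', hmem⟩
    rw [hC.inf_eq_bot] at h1
    exact hw'ne (by simpa using h1)
  set t : Fin 3 → ↥A1 := Fin.cons w' (fun i => ↑(c i)) with ht
  have tind : LinearIndependent k t := linearIndependent_fin_cons.2 ⟨cind, hwnotin⟩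
  set b : Basis (Fin 3) k ↥A1 :=
    basisOfLinearIndependentOfCardEqFinrank tind (by simp [hA1]) with hb
  have hbt : ⇑b = t := coe_basisOfLinearIndependentOfCardEqFinrank tind _
  have hgt : g t ≠ 0 := by
    intro h0
    apply hgne
    have h1 := g.eq_smul_basis_det b
    rw [hbt, h0, zero_smul] at h1
    exact h1
  -- preimages
  obtain ⟨u2, hu2⟩ := hsurj (t 1)
  obtain ⟨u3, hu3⟩ := hsurj (t 2)
  have hiso := iso w hwU ↑u2 u2.2 ↑u3 u3.2
  have hlam1z : lam1 ![w, ↑u2, ↑u3] = 0 := hlam1 _ ⟨0, by simpa using hwA⟩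
  have hproj : (fun i => p1 (![w, ↑u2, ↑u3] i)) = t := by
    funext i
    fin_cases i
    · show p1 w = t 0
      have : p1 ↑w' = w' := Submodule.linearProjOfIsCompl_apply_left hcompl w'
      simpa [ht] using this
    · exact hu2
    · exact hu3
  have hlam2v : lam2 ![w, ↑u2, ↑u3] = g t := by
    rw [rep, hgapp t, ← hproj]
  rw [hlam1z, hlam2v, zero_add] at hiso
  exact hgt hiso

/-- For a general 3-form `λ̄ = λ̄1 + λ̄2` on a 6-dimensional space
`W̄ = A1 ⊕ A2`, a 4-dimensional subspace `U4` is isotropic for `λ̄` iff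
`dim (U4 ⊓ A1) = dim (U4 ⊓ A2) = 2` and `U4 = (U4 ⊓ A1) ⊕ (U4 ⊓ A2)`. -/
theorem stmt_1 (k : Type*) [Field k] [CharZero k]
    (W : Type*) [AddCommGroup W] [Module k W] [FiniteDimensional k W]
    (hW : finrank k W = 6)
    (A1 A2 : Submodule k W)
    (hA12 : A1 ⊓ A2 = ⊥) (hA12' : A1 ⊔ A2 = ⊤)
    (hA1 : finrank k A1 = 3) (hA2 : finrank k A2 = 3)
    (lam1 lam2 : AlternatingMap k W k (Fin 3))
    (hlam1ne : lam1 ≠ 0) (hlam2ne : lam2 ≠ 0)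
    (hlam1 : ∀ v : Fin 3 → W, (∃ i, v i ∈ A1) → lam1 v = 0)
    (hlam2 : ∀ v : Fin 3 → W, (∃ i, v i ∈ A2) → lam2 v = 0)
    (lam : AlternatingMap k W k (Fin 3)) (hlam : lam = lam1 + lam2)
    (U4 : Submodule k W) (hU4 : finrank k U4 = 4) :
    (∀ u1 ∈ U4, ∀ u2 ∈ U4, ∀ u3 ∈ U4, lam ![u1, u2, u3] = 0) ↔
      (finrank k ↥(U4 ⊓ A1) = 2 ∧ finrank k ↥(U4 ⊓ A2) = 2 ∧
        (U4 ⊓ A1) ⊔ (U4 ⊓ A2) = U4) := by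
  subst hlam
  have hcompl : IsCompl A1 A2 := ⟨disjoint_iff.2 hA12, codisjoint_iff.2 hA12'⟩
  -- the two inner intersections are disjoint
  have hdisj : (U4 ⊓ A1) ⊓ (U4 ⊓ A2) = ⊥ := by
    rw [eq_bot_iff]
    intro x hx
    have : x ∈ A1 ⊓ A2 := ⟨hx.1.2, hx.2.2⟩
    rw [hA12] at this
    exact this
  have hsuple : (U4 ⊓ A1) ⊔ (U4 ⊓ A2) ≤ U4 := sup_le inf_le_left inf_le_left
  have hranks := Submodule.finrank_sup_add_finrank_inf_eq (U4 ⊓ A1) (U4 ⊓ A2)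
  rw [hdisj, finrank_bot, add_zero] at hranks
  have hsuprank : finrank k ↥((U4 ⊓ A1) ⊔ (U4 ⊓ A2)) ≤ 4 := by
    calc finrank k ↥((U4 ⊓ A1) ⊔ (U4 ⊓ A2)) ≤ finrank k ↥U4 :=
          Submodule.finrank_mono hsuple
      _ = 4 := hU4
  constructor
  · intro hiso
    have iso' : ∀ u1 ∈ U4, ∀ u2 ∈ U4, ∀ u3 ∈ U4,
        lam1 ![u1, u2, u3] + lam2 ![u1, u2, u3] = 0 := by
      intro u1 h1 u2 h2 u3 h3
      simpa using hiso u1 h1 u2 h2 u3 h3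
    have hd2 := core_aux k W hW A1 A2 hcompl hA1 hA2 lam1 lam2 hlam2ne hlam1 hlam2 U4 hU4 iso'
    have hd1 := core_aux k W hW A2 A1 hcompl.symm hA2 hA1 lam2 lam1 hlam1ne hlam2 hlam1 U4 hU4
      (by intro u1 h1 u2 h2 u3 h3; rw [add_comm]; exact iso' u1 h1 u2 h2 u3 h3)
    have h1 : finrank k ↥(U4 ⊓ A1) = 2 := by omega
    have h2 : finrank k ↥(U4 ⊓ A2) = 2 := by omega
    refine ⟨h1, h2, ?_⟩
    exact Submodule.eq_of_le_of_finrank_le hsuple (by omega)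
  · rintro ⟨h1, h2, hsup⟩ u1 hu1 u2 hu2 u3 hu3
    rw [← hsup] at hu1 hu2 hu3
    obtain ⟨a1', ha1', b1', hb1', hab1⟩ := Submodule.mem_sup.1 hu1
    obtain ⟨a2', ha2', b2', hb2', hab2⟩ := Submodule.mem_sup.1 hu2
    obtain ⟨a3', ha3', b3', hb3', hab3⟩ := Submodule.mem_sup.1 hu3
    set a : Fin 3 → W := ![a1', a2', a3'] with hadef
    set bb : Fin 3 → W := ![b1', b2', b3'] with hbdef
    have haA : ∀ i, a i ∈ U4 ⊓ A1 := by
      intro i; fin_cases i <;> simpa [hadef] using ‹_›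
    have hbA : ∀ i, bb i ∈ U4 ⊓ A2 := by
      intro i; fin_cases i <;> simpa [hbdef] using ‹_›
    have hu : ![u1, u2, u3] = fun i => a i + bb i := by
      funext i
      fin_cases i
      · simpa [hadef, hbdef] using hab1.symm
      · simpa [hadef, hbdef] using hab2.symm
      · simpa [hadef, hbdef] using hab3.symm
    have hdep : ∀ (v : Fin 3 → W) (S : Submodule k W), finrank k ↥S = 2 →
        (∀ i, v i ∈ S) → ¬LinearIndependent k v := by
      intro v S hS hv hind
      have hsp : Submodule.span k (Set.range v) ≤ S :=
        Submodule.span_le.2 (Set.range_subset_iff.2 hv)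
      have := Submodule.finrank_mono hsp
      rw [finrank_span_eq_card hind, hS] at this
      simp at this
    have hlam1v : lam1 ![u1, u2, u3] = 0 := by
      rw [hu, expand_aux A1 lam1 hlam1 a bb (fun i => (haA i).2)]
      exact lam1.map_linearDependent bb (hdep bb (U4 ⊓ A2) h2 hbA)
    have hlam2v : lam2 ![u1, u2, u3] = 0 := by
      have hu' : ![u1, u2, u3] = fun i => bb i + a i := by
        rw [hu]; funext i; rw [add_comm]
      rw [hu', expand_aux A2 lam2 hlam2 bb a (fun i => (hbA i).2)]
      exact lam2.map_linearDependent a (hdep a (U4 ⊓ A1) h1 haA)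
    simp [hlam1v, hlam2v]
end

section
/- Let μ be an alternating bilinear form on W̄ such that the induced pairing A1 × A2 → k, (a1,a2) ↦ μ(a1,a2), is nondegenerate. Then a 2-dimensional subspace U2 ⊆ W̄ satisfies both 'λ̄ annihilates U2' (λ̄(u,u',w) = 0 for all u,u' ∈ U2, w ∈ W̄) and 'μ vanishes on U2' (μ(u,u') = 0 for all u,u' ∈ U2) if and only if U2 = span{a1,a2} for some nonzero a1 ∈ A1 and a2 ∈ A2 with μ(a1,a2) = 0. Moreover, the map sending such a U2 to the pair (span{a1}, {a ∈ A1 : μ(a,a2) = 0}) is a bijection onto the set of full flags (1-dimensional subspace contained in a 2-dimensional subspace) in A1. (Set-theoretic form of the paper's Lemma identifying the zero locus of (λ̄,μ) on Gr(2,6) with the flag variety Fl(1,2;A1).) -/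
open Module

section AuxStmt2

variable {k : Type*} [Field k] {W : Type*} [AddCommGroup W] [Module k W]

lemma aux_pair_indep {A1 A2 : Submodule k W} (hA12 : A1 ⊓ A2 = ⊥)
    {a1 a2 : W} (h1 : a1 ∈ A1) (h2 : a2 ∈ A2) (hn1 : a1 ≠ 0) (hn2 : a2 ≠ 0) :
    ∀ c d : k, c • a1 + d • a2 = 0 → c = 0 ∧ d = 0 := by
  intro c d h
  have hmem : c • a1 ∈ A1 ⊓ A2 := by
    refine ⟨A1.smul_mem c h1, ?_⟩
    have : c • a1 = -(d • a2) := eq_neg_of_add_eq_zero_left h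
    rw [this]; exact A2.neg_mem (A2.smul_mem d h2)
  rw [hA12, Submodule.mem_bot] at hmem
  have hc : c = 0 := by
    rcases smul_eq_zero.mp hmem with h' | h'
    · exact h'
    · exact absurd h' hn1
  refine ⟨hc, ?_⟩
  rw [hc, zero_smul, zero_add] at h
  rcases smul_eq_zero.mp h with h' | h'
  · exact h'
  · exact absurd h' hn2

lemma aux_span_pair_finrank {A1 A2 : Submodule k W} (hA12 : A1 ⊓ A2 = ⊥)
    {a1 a2 : W} (h1 : a1 ∈ A1) (h2 : a2 ∈ A2) (hn1 : a1 ≠ 0) (hn2 : a2 ≠ 0) :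
    finrank k ↥(Submodule.span k {a1, a2}) = 2 := by
  have hli : LinearIndependent k ![a1, a2] :=
    LinearIndependent.pair_iff.mpr (aux_pair_indep hA12 h1 h2 hn1 hn2)
  have h := finrank_span_eq_card hli
  have hr : Set.range ![a1, a2] = {a1, a2} := by
    ext x; simp [Fin.exists_fin_two, eq_comm]; tauto
  rw [hr] at h
  simpa using h

lemma aux_key3 {V : Type*} [AddCommGroup V] [Module k V] [FiniteDimensional k V]
    (hV : finrank k V = 3) (f : AlternatingMap k V k (Fin 3)) (hf : f ≠ 0)
    (x y : V) (h : ∀ z : V, f ![x, y, z] = 0) :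
    ∃ c d : k, (c ≠ 0 ∨ d ≠ 0) ∧ c • x + d • y = 0 := by
  by_contra hcon
  push_neg at hcon
  have hli : LinearIndependent k ![x, y] := by
    rw [LinearIndependent.pair_iff]
    intro s t hst
    by_contra hne
    rw [not_and_or] at hne
    exact hcon s t (by tauto) hst
  have hspan : Submodule.span k (Set.range ![x, y]) ≠ ⊤ := by
    intro hs
    have h2 := finrank_span_eq_card hli
    rw [hs, finrank_top] at h2
    rw [hV] at h2
    simp at h2
  obtain ⟨z, hz⟩ : ∃ z, z ∉ Submodule.span k (Set.range ![x, y]) := by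
    by_contra hc; push_neg at hc
    exact hspan (Submodule.eq_top_iff'.2 hc)
  have hxyz : ![x, y, z] = Fin.snoc ![x, y] z := by
    funext i; fin_cases i <;> rfl
  have hli3 : LinearIndependent k ![x, y, z] := by
    rw [hxyz, linearIndependent_fin_snoc]
    exact ⟨hli, hz⟩
  have hcard : Fintype.card (Fin 3) = finrank k V := by simp [hV]
  let b := basisOfLinearIndependentOfCardEqFinrank hli3 hcard
  have hb : ⇑b = ![x, y, z] := coe_basisOfLinearIndependentOfCardEqFinrank _ _
  have hzero : f = 0 := by
    rw [f.eq_smul_basis_det b, hb, h z, zero_smul]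
  exact hf hzero

end AuxStmt2

/-- For a general 3-form `λ̄ = λ̄1 + λ̄2` on `W̄ = A1 ⊕ A2` and a
2-form `μ` inducing a nondegenerate pairing between `A1` and `A2`, the
2-dimensional subspaces annihilated by `λ̄` and isotropic for `μ` are exactly the
spans of pairs `(a1, a2)` with `0 ≠ a1 ∈ A1`, `0 ≠ a2 ∈ A2`, `μ(a1,a2) = 0`;
moreover `U2 ↦ (U2 ⊓ A1, {a ∈ A1 : μ(a, U2 ⊓ A2) = 0})` is a bijection onto the
set of full flags in `A1`. -/
theorem stmt_2 (k : Type*) [Field k] [CharZero k]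
    (W : Type*) [AddCommGroup W] [Module k W] [FiniteDimensional k W]
    (hW : finrank k W = 6)
    (A1 A2 : Submodule k W)
    (hA12 : A1 ⊓ A2 = ⊥) (hA12' : A1 ⊔ A2 = ⊤)
    (hA1 : finrank k A1 = 3) (hA2 : finrank k A2 = 3)
    (lam1 lam2 : AlternatingMap k W k (Fin 3))
    (hlam1ne : lam1 ≠ 0) (hlam2ne : lam2 ≠ 0)
    (hlam1 : ∀ v : Fin 3 → W, (∃ i, v i ∈ A1) → lam1 v = 0)
    (hlam2 : ∀ v : Fin 3 → W, (∃ i, v i ∈ A2) → lam2 v = 0)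
    (lam : AlternatingMap k W k (Fin 3)) (hlam : lam = lam1 + lam2)
    (mu : W →ₗ[k] W →ₗ[k] k) (hmualt : ∀ v : W, mu v v = 0)
    (hnd1 : ∀ a1 ∈ A1, a1 ≠ 0 → ∃ a2 ∈ A2, mu a1 a2 ≠ 0)
    (hnd2 : ∀ a2 ∈ A2, a2 ≠ 0 → ∃ a1 ∈ A1, mu a1 a2 ≠ 0) :
    (∀ U2 : Submodule k W, finrank k U2 = 2 →
      (((∀ u ∈ U2, ∀ u' ∈ U2, ∀ w : W, lam ![u, u', w] = 0) ∧
        (∀ u ∈ U2, ∀ u' ∈ U2, mu u u' = 0)) ↔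
       (∃ a1 ∈ A1, ∃ a2 ∈ A2, a1 ≠ 0 ∧ a2 ≠ 0 ∧ mu a1 a2 = 0 ∧
         U2 = Submodule.span k {a1, a2}))) ∧
    Set.BijOn
      (fun U2 : Submodule k W =>
        ((U2 ⊓ A1,
          A1 ⊓ ⨅ b : ↥(U2 ⊓ A2), LinearMap.ker (mu.flip (b : W))) :
          Submodule k W × Submodule k W))
      {U2 : Submodule k W | finrank k U2 = 2 ∧
        (∀ u ∈ U2, ∀ u' ∈ U2, ∀ w : W, lam ![u, u', w] = 0) ∧
        (∀ u ∈ U2, ∀ u' ∈ U2, mu u u' = 0)}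
      {LP : Submodule k W × Submodule k W |
        LP.1 ≤ LP.2 ∧ LP.2 ≤ A1 ∧ finrank k LP.1 = 1 ∧ finrank k LP.2 = 2} := by
  subst hlam
  have hcompl : IsCompl A1 A2 := ⟨disjoint_iff.2 hA12, codisjoint_iff.2 hA12'⟩
  set p1 : W →ₗ[k] W := A1.subtype ∘ₗ A1.projectionOnto A2 hcompl with hp1def
  set p2 : W →ₗ[k] W := A2.subtype ∘ₗ A2.projectionOnto A1 hcompl.symm with hp2def
  have hp_add : ∀ w : W, p1 w + p2 w = w := fun w =>
    Submodule.projection_add_projection_eq_self hcompl w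
  have hp1mem : ∀ w, p1 w ∈ A1 := fun w => (A1.projectionOnto A2 hcompl w).2
  have hp2mem : ∀ w, p2 w ∈ A2 := fun w => (A2.projectionOnto A1 hcompl.symm w).2
  have hp1_2 : ∀ w ∈ A2, p1 w = 0 := by
    intro w hw
    simp [hp1def, Submodule.projectionOnto_apply_eq_zero_iff, hw]
  have hp2_1 : ∀ w ∈ A1, p2 w = 0 := by
    intro w hw
    simp [hp2def, Submodule.projectionOnto_apply_eq_zero_iff, hw]
  have hp2_2 : ∀ w ∈ A2, p2 w = w := by
    intro w hw
    have : p1 w + p2 w = w := hp_add w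
    rw [hp1_2 w hw, zero_add] at this; exact this
  have hp1_1 : ∀ w ∈ A1, p1 w = w := by
    intro w hw
    have : p1 w + p2 w = w := hp_add w
    rw [hp2_1 w hw, add_zero] at this; exact this
  have hker2 : ∀ x : W, p2 x = 0 → x ∈ A1 := by
    intro x hx
    have := hp_add x
    rw [hx, add_zero] at this
    rw [← this]; exact hp1mem x
  have hker1 : ∀ x : W, p1 x = 0 → x ∈ A2 := by
    intro x hx
    have := hp_add x
    rw [hx, zero_add] at this
    rw [← this]; exact hp2mem x
  -- factorization of lam1 through p2 and lam2 through p1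
  have hfact : ∀ (g : AlternatingMap k W k (Fin 3)) (A : Submodule k W) (p q : W →ₗ[k] W),
      (∀ v : Fin 3 → W, (∃ i, v i ∈ A) → g v = 0) → (∀ w, p w ∈ A) →
      (∀ w, p w + q w = w) →
      ∀ v : Fin 3 → W, g v = g (fun i => q (v i)) := by
    intro g A p q hg hp hpq v
    have hv : (fun i => p (v i)) + (fun i => q (v i)) = v := by
      funext i; exact hpq (v i)
    conv_lhs => rw [← hv]
    rw [show g ((fun i => p (v i)) + fun i => q (v i))
        = g.toMultilinearMap ((fun i => p (v i)) + fun i => q (v i)) from rfl]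
    rw [MultilinearMap.map_add_univ]
    rw [Finset.sum_eq_single ∅]
    · simp
    · intro s _ hs
      obtain ⟨i, hi⟩ := Finset.nonempty_iff_ne_empty.2 hs
      apply hg
      exact ⟨i, by rw [Finset.piecewise_eq_of_mem _ _ _ hi]; exact hp (v i)⟩
    · intro h; exact absurd (Finset.mem_univ _) h
  have hfact1 : ∀ v : Fin 3 → W, lam1 v = lam1 (fun i => p2 (v i)) :=
    hfact lam1 A1 p1 p2 hlam1 hp1mem hp_add
  have hfact2 : ∀ v : Fin 3 → W, lam2 v = lam2 (fun i => p1 (v i)) := by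
    intro v
    refine hfact lam2 A2 p2 p1 hlam2 hp2mem ?_ v
    intro w; rw [add_comm]; exact hp_add w
  have hmat : ∀ (q : W →ₗ[k] W) (x y z : W),
      (fun i => q (![x, y, z] i)) = ![q x, q y, q z] := by
    intro q x y z; funext i; fin_cases i <;> simp
  have hmuanti : ∀ x y : W, mu y x = - mu x y := by
    intro x y
    have h := hmualt (x + y)
    simp only [map_add, LinearMap.add_apply, hmualt] at h
    have : mu x y + mu y x = 0 := by linear_combination h
    linear_combination this
  -- dependence helper
  have hdep3 : ∀ (g : AlternatingMap k W k (Fin 3)) (a : W) (c d : k) (w : W),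
      g ![c • a, d • a, w] = 0 := by
    intro g a c d w
    apply g.map_linearDependent
    intro hli
    by_cases hd : d = 0
    · exact hli.ne_zero 1 (by simp [hd])
    · have hsum : ∑ i, (![d, -c, (0:k)]) i • (![c • a, d • a, w]) i = 0 := by
        simp [Fin.sum_univ_three, smul_smul]
        module
      have := Fintype.linearIndependent_iff.mp hli ![d, -c, 0] hsum 0
      simp at this
      exact hd this
  -- backward verification
  have hbw : ∀ a1 ∈ A1, ∀ a2 ∈ A2, mu a1 a2 = 0 →
      ((∀ u ∈ Submodule.span k {a1, a2}, ∀ u' ∈ Submodule.span k {a1, a2},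
          ∀ w : W, (lam1 + lam2) ![u, u', w] = 0) ∧
       (∀ u ∈ Submodule.span k {a1, a2}, ∀ u' ∈ Submodule.span k {a1, a2},
          mu u u' = 0)) := by
    intro a1 ha1 a2 ha2 hmu0
    have hmu0' : mu a2 a1 = 0 := by rw [hmuanti a1 a2, hmu0, neg_zero]
    constructor
    · intro u hu u' hu' w
      obtain ⟨c, d, hcd⟩ := Submodule.mem_span_pair.mp hu
      obtain ⟨c', d', hcd'⟩ := Submodule.mem_span_pair.mp hu'
      have hq2 : ∀ e f : k, p2 (e • a1 + f • a2) = f • a2 := by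
        intro e f
        rw [map_add, map_smul, map_smul, hp2_1 a1 ha1, hp2_2 a2 ha2, smul_zero, zero_add]
      have hq1 : ∀ e f : k, p1 (e • a1 + f • a2) = e • a1 := by
        intro e f
        rw [map_add, map_smul, map_smul, hp1_1 a1 ha1, hp1_2 a2 ha2, smul_zero, add_zero]
      rw [AlternatingMap.add_apply]
      rw [hfact1 ![u, u', w], hfact2 ![u, u', w], hmat, hmat]
      rw [← hcd, ← hcd', hq2, hq2, hq1, hq1]
      rw [hdep3 lam1 a2 d d' (p2 w), hdep3 lam2 a1 c c' (p1 w), add_zero]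
    · intro u hu u' hu'
      obtain ⟨c, d, hcd⟩ := Submodule.mem_span_pair.mp hu
      obtain ⟨c', d', hcd'⟩ := Submodule.mem_span_pair.mp hu'
      rw [← hcd, ← hcd']
      simp [map_add, map_smul, hmualt, hmu0, hmu0']
  -- span pair intersection lemmas
  have hspan_inf1 : ∀ a1 ∈ A1, ∀ a2 ∈ A2,
      Submodule.span k {a1, a2} ⊓ A1 = Submodule.span k {a1} := by
    intro a1 h1 a2 h2
    apply le_antisymm
    · rintro x ⟨hx, hxA⟩
      obtain ⟨c, d, hcd⟩ := Submodule.mem_span_pair.mp hx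
      have hda : d • a2 ∈ A1 ⊓ A2 := by
        refine ⟨?_, A2.smul_mem d h2⟩
        have : d • a2 = x - c • a1 := by rw [← hcd]; abel
        rw [this]; exact A1.sub_mem hxA (A1.smul_mem c h1)
      rw [hA12, Submodule.mem_bot] at hda
      have hx' : x = c • a1 := by rw [← hcd, hda, add_zero]
      rw [hx']
      exact Submodule.smul_mem _ c (Submodule.mem_span_singleton_self a1)
    · apply le_inf
      · exact Submodule.span_mono (Set.singleton_subset_iff.mpr (Set.mem_insert a1 {a2}))
      · rw [Submodule.span_le]; simpa using h1
  have hspan_inf2 : ∀ a1 ∈ A1, ∀ a2 ∈ A2,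
      Submodule.span k {a1, a2} ⊓ A2 = Submodule.span k {a2} := by
    intro a1 h1 a2 h2
    apply le_antisymm
    · rintro x ⟨hx, hxA⟩
      obtain ⟨c, d, hcd⟩ := Submodule.mem_span_pair.mp hx
      have hda : c • a1 ∈ A1 ⊓ A2 := by
        refine ⟨A1.smul_mem c h1, ?_⟩
        have : c • a1 = x - d • a2 := by rw [← hcd]; abel
        rw [this]; exact A2.sub_mem hxA (A2.smul_mem d h2)
      rw [hA12, Submodule.mem_bot] at hda
      have hx' : x = d • a2 := by rw [← hcd, hda, zero_add]
      rw [hx']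
      exact Submodule.smul_mem _ d (Submodule.mem_span_singleton_self a2)
    · apply le_inf
      · exact Submodule.span_mono (Set.singleton_subset_iff.mpr (Set.mem_insert_of_mem _ rfl))
      · rw [Submodule.span_le]; simpa using h2
  -- Part 1
  have part1 : ∀ U2 : Submodule k W, finrank k U2 = 2 →
      (((∀ u ∈ U2, ∀ u' ∈ U2, ∀ w : W, (lam1 + lam2) ![u, u', w] = 0) ∧
        (∀ u ∈ U2, ∀ u' ∈ U2, mu u u' = 0)) ↔
       (∃ a1 ∈ A1, ∃ a2 ∈ A2, a1 ≠ 0 ∧ a2 ≠ 0 ∧ mu a1 a2 = 0 ∧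
         U2 = Submodule.span k {a1, a2})) := by
    intro U2 h2
    constructor
    · rintro ⟨hand, hiso⟩
      -- a basis of U2
      let b := finBasisOfFinrankEq k ↥U2 h2
      set u : Fin 2 → W := fun i => ↑(b i) with hudef
      have humem : ∀ i, u i ∈ U2 := fun i => (b i).2
      have huli : LinearIndependent k u := by
        have := b.linearIndependent
        exact this.map' U2.subtype U2.ker_subtype
      -- lam1 (u0, u1, z) = 0 for z in A2
      have hl1z : ∀ z ∈ A2, lam1 ![u 0, u 1, z] = 0 := by
        intro z hz
        have h0 := hand (u 0) (humem 0) (u 1) (humem 1) z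
        rw [AlternatingMap.add_apply] at h0
        have h2' : lam2 ![u 0, u 1, z] = 0 := by
          apply hlam2; exact ⟨2, by simpa using hz⟩
        rw [h2'] at h0
        linear_combination h0
      have hl2z : ∀ z ∈ A1, lam2 ![u 0, u 1, z] = 0 := by
        intro z hz
        have h0 := hand (u 0) (humem 0) (u 1) (humem 1) z
        rw [AlternatingMap.add_apply] at h0
        have h1' : lam1 ![u 0, u 1, z] = 0 := by
          apply hlam1; exact ⟨2, by simpa using hz⟩
        rw [h1'] at h0
        linear_combination h0
      -- restricted forms
      have hf2ne : lam1.compLinearMap A2.subtype ≠ 0 := by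
        intro h0
        apply hlam1ne
        ext v
        rw [hfact1 v]
        calc lam1 (fun i => p2 (v i))
            = (lam1.compLinearMap A2.subtype) (fun i => (⟨p2 (v i), hp2mem _⟩ : ↥A2)) := rfl
          _ = 0 := by rw [h0]; rfl
      have hf1ne : lam2.compLinearMap A1.subtype ≠ 0 := by
        intro h0
        apply hlam2ne
        ext v
        rw [hfact2 v]
        calc lam2 (fun i => p1 (v i))
            = (lam2.compLinearMap A1.subtype) (fun i => (⟨p1 (v i), hp1mem _⟩ : ↥A1)) := rfl
          _ = 0 := by rw [h0]; rfl
      -- obtain dependence for p2 side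
      obtain ⟨c, d, hcd0, hcd⟩ := aux_key3 hA2 (lam1.compLinearMap A2.subtype) hf2ne
          (⟨p2 (u 0), hp2mem _⟩ : ↥A2) (⟨p2 (u 1), hp2mem _⟩ : ↥A2) (by
        intro z
        have e1 : (lam1.compLinearMap A2.subtype)
            ![(⟨p2 (u 0), hp2mem _⟩ : ↥A2), ⟨p2 (u 1), hp2mem _⟩, z]
            = lam1 ![p2 (u 0), p2 (u 1), (↑z : W)] := by
          show lam1 (fun i => (↑(![(⟨p2 (u 0), hp2mem _⟩ : ↥A2), ⟨p2 (u 1), hp2mem _⟩, z] i) : W)) = _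
          congr 1; funext i; fin_cases i <;> rfl
        have e3 : lam1 ![p2 (u 0), p2 (u 1), p2 (↑z : W)] = lam1 ![u 0, u 1, (↑z : W)] := by
          rw [hfact1 ![u 0, u 1, (↑z : W)], hmat]
        rw [e1, ← hp2_2 (↑z : W) z.2, e3]
        exact hl1z (↑z : W) z.2)
      obtain ⟨c', d', hcd0', hcd'⟩ := aux_key3 hA1 (lam2.compLinearMap A1.subtype) hf1ne
          (⟨p1 (u 0), hp1mem _⟩ : ↥A1) (⟨p1 (u 1), hp1mem _⟩ : ↥A1) (by
        intro z
        have e1 : (lam2.compLinearMap A1.subtype)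
            ![(⟨p1 (u 0), hp1mem _⟩ : ↥A1), ⟨p1 (u 1), hp1mem _⟩, z]
            = lam2 ![p1 (u 0), p1 (u 1), (↑z : W)] := by
          show lam2 (fun i => (↑(![(⟨p1 (u 0), hp1mem _⟩ : ↥A1), ⟨p1 (u 1), hp1mem _⟩, z] i) : W)) = _
          congr 1; funext i; fin_cases i <;> rfl
        have e3 : lam2 ![p1 (u 0), p1 (u 1), p1 (↑z : W)] = lam2 ![u 0, u 1, (↑z : W)] := by
          rw [hfact2 ![u 0, u 1, (↑z : W)], hmat]
        rw [e1, ← hp1_1 (↑z : W) z.2, e3]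
        exact hl2z (↑z : W) z.2)
      have hcdW : c • p2 (u 0) + d • p2 (u 1) = 0 := by
        have := congrArg (Subtype.val) hcd
        simpa using this
      have hcdW' : c' • p1 (u 0) + d' • p1 (u 1) = 0 := by
        have := congrArg (Subtype.val) hcd'
        simpa using this
      have ha1A : c • u 0 + d • u 1 ∈ A1 := by
        apply hker2
        rw [map_add, map_smul, map_smul]
        exact hcdW
      have ha2A : c' • u 0 + d' • u 1 ∈ A2 := by
        apply hker1
        rw [map_add, map_smul, map_smul]
        exact hcdW'
      have hnz : ∀ e f : k, (e ≠ 0 ∨ f ≠ 0) → e • u 0 + f • u 1 ≠ 0 := by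
        intro e f hef h0
        have hsum : ∑ i, (![e, f]) i • u i = 0 := by
          rw [Fin.sum_univ_two]; simpa using h0
        have hz := Fintype.linearIndependent_iff.mp huli ![e, f] hsum
        rcases hef with h | h
        · exact h (by simpa using hz 0)
        · exact h (by simpa using hz 1)
      have ha1U : c • u 0 + d • u 1 ∈ U2 :=
        U2.add_mem (U2.smul_mem _ (humem 0)) (U2.smul_mem _ (humem 1))
      have ha2U : c' • u 0 + d' • u 1 ∈ U2 :=
        U2.add_mem (U2.smul_mem _ (humem 0)) (U2.smul_mem _ (humem 1))
      refine ⟨c • u 0 + d • u 1, ha1A, c' • u 0 + d' • u 1, ha2A,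
        hnz c d hcd0, hnz c' d' hcd0', hiso _ ha1U _ ha2U, ?_⟩
      have hle : Submodule.span k {c • u 0 + d • u 1, c' • u 0 + d' • u 1} ≤ U2 := by
        rw [Submodule.span_le]
        exact Set.insert_subset_iff.mpr ⟨ha1U, Set.singleton_subset_iff.mpr ha2U⟩
      exact (Submodule.eq_of_le_of_finrank_eq hle
        ((aux_span_pair_finrank hA12 ha1A ha2A (hnz c d hcd0) (hnz c' d' hcd0')).trans
          h2.symm)).symm
    · rintro ⟨a1, ha1, a2, ha2, hn1, hn2, hmu0, hU2eq⟩
      rw [hU2eq]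
      exact hbw a1 ha1 a2 ha2 hmu0
  -- infimum of kernels over U2 ⊓ A2 = span {a2}
  have hiInf : ∀ a2 ∈ A2, ∀ U2 : Submodule k W, U2 ⊓ A2 = Submodule.span k {a2} →
      (⨅ b : ↥(U2 ⊓ A2), LinearMap.ker (mu.flip (b : W))) = LinearMap.ker (mu.flip a2) := by
    intro a2 _ U2 hU2
    apply le_antisymm
    · exact iInf_le _ (⟨a2, by rw [hU2]; exact Submodule.mem_span_singleton_self a2⟩ : ↥(U2 ⊓ A2))
    · refine le_iInf fun bb => ?_
      have hb : (↑bb : W) ∈ Submodule.span k {a2} := by rw [← hU2]; exact bb.2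
      rw [Submodule.mem_span_singleton] at hb
      obtain ⟨e, he⟩ := hb
      intro x hx
      rw [LinearMap.mem_ker, LinearMap.flip_apply] at hx ⊢
      rw [← he, map_smul, hx, smul_zero]
  -- corank computation
  have hcor : ∀ b ∈ A2, b ≠ 0 → finrank k ↥(A1 ⊓ LinearMap.ker (mu.flip b)) = 2 := by
    intro b hb hbn
    have hker : LinearMap.ker ((mu.flip b).comp A1.subtype)
        = Submodule.comap A1.subtype (LinearMap.ker (mu.flip b)) := LinearMap.ker_comp _ _
    have h1 : finrank k ↥(A1 ⊓ LinearMap.ker (mu.flip b))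
        = finrank k ↥(LinearMap.ker ((mu.flip b).comp A1.subtype)) := by
      rw [hker]
      conv_lhs => rw [← Submodule.map_comap_subtype]
      rw [Submodule.finrank_map_subtype_eq]
    have h2 := LinearMap.finrank_range_add_finrank_ker ((mu.flip b).comp A1.subtype)
    rw [hA1] at h2
    have hfne : (mu.flip b).comp A1.subtype ≠ 0 := by
      obtain ⟨a, haA, ha⟩ := hnd2 b hb hbn
      intro h0
      apply ha
      have := DFunLike.congr_fun h0 (⟨a, haA⟩ : ↥A1)
      simpa using this
    have hrange : finrank k ↥(LinearMap.range ((mu.flip b).comp A1.subtype)) = 1 := by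
      have hle : finrank k ↥(LinearMap.range ((mu.flip b).comp A1.subtype)) ≤ 1 := by
        have := Submodule.finrank_le (LinearMap.range ((mu.flip b).comp A1.subtype))
        simpa using this
      have hne : finrank k ↥(LinearMap.range ((mu.flip b).comp A1.subtype)) ≠ 0 := by
        intro h0
        rw [Submodule.finrank_eq_zero, LinearMap.range_eq_bot] at h0
        exact hfne h0
      omega
    rw [h1]
    omega
  refine ⟨part1, ?_, ?_, ?_⟩
  · -- MapsTo
    intro U2 hU2
    simp only [Set.mem_setOf_eq] at hU2 ⊢
    obtain ⟨h2, hand, hiso⟩ := hU2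
    obtain ⟨a1, ha1A, a2, ha2A, hn1, hn2, hmu0, hU2eq⟩ := (part1 U2 h2).mp ⟨hand, hiso⟩
    have hi1 : U2 ⊓ A1 = Submodule.span k {a1} := by
      rw [hU2eq]; exact hspan_inf1 a1 ha1A a2 ha2A
    have hi2 : U2 ⊓ A2 = Submodule.span k {a2} := by
      rw [hU2eq]; exact hspan_inf2 a1 ha1A a2 ha2A
    have hiinf := hiInf a2 ha2A U2 hi2
    refine ⟨?_, ?_, ?_, ?_⟩
    · show U2 ⊓ A1 ≤ A1 ⊓ _
      rw [hi1, hiinf, Submodule.span_le]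
      intro x hx
      rw [Set.mem_singleton_iff] at hx
      subst hx
      exact ⟨ha1A, by rw [SetLike.mem_coe, LinearMap.mem_ker, LinearMap.flip_apply]; exact hmu0⟩
    · exact inf_le_left
    · show finrank k ↥(U2 ⊓ A1) = 1
      rw [hi1]; exact finrank_span_singleton hn1
    · show finrank k ↥(A1 ⊓ _) = 2
      rw [hiinf]; exact hcor a2 ha2A hn2
  · -- InjOn
    intro U2 hU2 U2' hU2' heq
    simp only [Set.mem_setOf_eq] at hU2 hU2'
    obtain ⟨h2, hand, hiso⟩ := hU2
    obtain ⟨h2', hand', hiso'⟩ := hU2'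
    obtain ⟨a1, ha1A, a2, ha2A, hn1, hn2, hmu0, hU2eq⟩ := (part1 U2 h2).mp ⟨hand, hiso⟩
    obtain ⟨b1, hb1A, b2, hb2A, hm1, hm2, hmu0', hU2eq'⟩ := (part1 U2' h2').mp ⟨hand', hiso'⟩
    have hi1 : U2 ⊓ A1 = Submodule.span k {a1} := by
      rw [hU2eq]; exact hspan_inf1 a1 ha1A a2 ha2A
    have hi2 : U2 ⊓ A2 = Submodule.span k {a2} := by
      rw [hU2eq]; exact hspan_inf2 a1 ha1A a2 ha2A
    have hi1' : U2' ⊓ A1 = Submodule.span k {b1} := by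
      rw [hU2eq']; exact hspan_inf1 b1 hb1A b2 hb2A
    have hi2' : U2' ⊓ A2 = Submodule.span k {b2} := by
      rw [hU2eq']; exact hspan_inf2 b1 hb1A b2 hb2A
    have he1 : U2 ⊓ A1 = U2' ⊓ A1 := congrArg Prod.fst heq
    have he2 : A1 ⊓ (⨅ b : ↥(U2 ⊓ A2), LinearMap.ker (mu.flip (b : W)))
        = A1 ⊓ ⨅ b : ↥(U2' ⊓ A2), LinearMap.ker (mu.flip (b : W)) := congrArg Prod.snd heq
    rw [hi1, hi1'] at he1
    rw [hiInf a2 ha2A U2 hi2, hiInf b2 hb2A U2' hi2'] at he2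
    -- b1 is a nonzero multiple of a1
    obtain ⟨e, hee⟩ := Submodule.mem_span_singleton.mp
      (he1 ▸ Submodule.mem_span_singleton_self b1)
    have hene : e ≠ 0 := by
      intro h0; rw [h0, zero_smul] at hee; exact hm1 hee.symm
    -- kernel iff
    have hkiff : ∀ a ∈ A1, (mu a a2 = 0 ↔ mu a b2 = 0) := by
      intro a haA
      constructor
      · intro h
        have hmem : a ∈ A1 ⊓ LinearMap.ker (mu.flip a2) :=
          ⟨haA, by rw [SetLike.mem_coe, LinearMap.mem_ker, LinearMap.flip_apply]; exact h⟩
        rw [he2] at hmem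
        have := hmem.2
        rwa [SetLike.mem_coe, LinearMap.mem_ker, LinearMap.flip_apply] at this
      · intro h
        have hmem : a ∈ A1 ⊓ LinearMap.ker (mu.flip b2) :=
          ⟨haA, by rw [SetLike.mem_coe, LinearMap.mem_ker, LinearMap.flip_apply]; exact h⟩
        rw [← he2] at hmem
        have := hmem.2
        rwa [SetLike.mem_coe, LinearMap.mem_ker, LinearMap.flip_apply] at this
    obtain ⟨x, hxA, hx⟩ := hnd2 a2 ha2A hn2
    have hall : ∀ a ∈ A1, mu a b2 = (mu x b2 / mu x a2) * mu a a2 := by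
      intro a haA
      have hwA : a - (mu a a2 / mu x a2) • x ∈ A1 := A1.sub_mem haA (A1.smul_mem _ hxA)
      have hw2 : mu (a - (mu a a2 / mu x a2) • x) a2 = 0 := by
        rw [map_sub, LinearMap.sub_apply, map_smul, LinearMap.smul_apply, smul_eq_mul]
        field_simp
        ring
      have hw2' := (hkiff _ hwA).mp hw2
      rw [map_sub, LinearMap.sub_apply, map_smul, LinearMap.smul_apply, smul_eq_mul,
        sub_eq_zero] at hw2'
      rw [hw2']
      field_simp
    have hb2eq : b2 = (mu x b2 / mu x a2) • a2 := by
      by_contra hne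
      have hmem : b2 - (mu x b2 / mu x a2) • a2 ∈ A2 := A2.sub_mem hb2A (A2.smul_mem _ ha2A)
      have hnz : b2 - (mu x b2 / mu x a2) • a2 ≠ 0 := fun h0 => hne (by
        rw [sub_eq_zero] at h0; exact h0)
      obtain ⟨a, haA, ha⟩ := hnd2 _ hmem hnz
      apply ha
      rw [map_sub, map_smul, smul_eq_mul, hall a haA, sub_self]
    have hcne : (mu x b2 / mu x a2) ≠ 0 := by
      intro h0; rw [h0, zero_smul] at hb2eq; exact hm2 hb2eq
    rw [hU2eq, hU2eq', ← hee, hb2eq]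
    rw [Submodule.span_insert, Submodule.span_insert,
      Submodule.span_singleton_smul_eq (isUnit_iff_ne_zero.mpr hene) a1]
    have : Submodule.span k ({(mu x b2 / mu x a2) • a2} : Set W) = Submodule.span k {a2} :=
      Submodule.span_singleton_smul_eq (isUnit_iff_ne_zero.mpr hcne) a2
    rw [this]
  · -- SurjOn
    rintro ⟨L, P⟩ ⟨hle, hPA1, hL1, hP2⟩
    have hLne : L ≠ ⊥ := by
      intro h0; rw [h0] at hL1; rw [finrank_bot] at hL1; exact one_ne_zero hL1.symm
    obtain ⟨a1, ha1L, hn1⟩ := Submodule.exists_mem_ne_zero_of_ne_bot hLne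
    have hLspan : L = Submodule.span k {a1} := by
      symm
      apply Submodule.eq_of_le_of_finrank_eq
      · rw [Submodule.span_le]; simpa using ha1L
      · rw [finrank_span_singleton hn1, hL1]
    have ha1A : a1 ∈ A1 := hPA1 (hle ha1L)
    -- find a2
    have hfr : finrank k (↥P →ₗ[k] k) = 2 := by
      rw [Module.finrank_linearMap, finrank_self, mul_one, hP2]
    have hkerne : LinearMap.ker ((mu.flip.compl₂ P.subtype).comp A2.subtype) ≠ ⊥ := by
      intro h0
      have h2 := LinearMap.finrank_range_add_finrank_ker
        ((mu.flip.compl₂ P.subtype).comp A2.subtype)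
      rw [h0, finrank_bot, hA2] at h2
      have hle2 := Submodule.finrank_le
        (LinearMap.range ((mu.flip.compl₂ P.subtype).comp A2.subtype))
      rw [hfr] at hle2
      omega
    obtain ⟨bb, hbb, hbbne⟩ := Submodule.exists_mem_ne_zero_of_ne_bot hkerne
    obtain ⟨a2, ha2A⟩ := bb
    have hn2 : a2 ≠ 0 := fun h0 => hbbne (by apply Subtype.ext; exact h0)
    have hPmu : ∀ a ∈ P, mu a a2 = 0 := by
      intro a haP
      have := DFunLike.congr_fun (LinearMap.mem_ker.mp hbb) (⟨a, haP⟩ : ↥P)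
      simpa [LinearMap.flip_apply] using this
    have hmu0 : mu a1 a2 = 0 := hPmu a1 (hle ha1L)
    have hi1 := hspan_inf1 a1 ha1A a2 ha2A
    have hi2 := hspan_inf2 a1 ha1A a2 ha2A
    have hiinf := hiInf a2 ha2A _ hi2
    have hmemS : (Submodule.span k {a1, a2}) ∈
        {U2 : Submodule k W | finrank k ↥U2 = 2 ∧
          (∀ u ∈ U2, ∀ u' ∈ U2, ∀ w : W, (lam1 + lam2) ![u, u', w] = 0) ∧
          (∀ u ∈ U2, ∀ u' ∈ U2, mu u u' = 0)} :=
      ⟨aux_span_pair_finrank hA12 ha1A ha2A hn1 hn2,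
        (hbw a1 ha1A a2 ha2A hmu0).1, (hbw a1 ha1A a2 ha2A hmu0).2⟩
    have hsnd : A1 ⊓ LinearMap.ker (mu.flip a2) = P := by
      symm
      apply Submodule.eq_of_le_of_finrank_eq
      · refine le_inf hPA1 (fun a haP => ?_)
        rw [LinearMap.mem_ker, LinearMap.flip_apply]
        exact hPmu a haP
      · rw [hP2, hcor a2 ha2A hn2]
    refine ⟨Submodule.span k {a1, a2}, hmemS, ?_⟩
    show (Submodule.span k {a1, a2} ⊓ A1,
      A1 ⊓ ⨅ b : ↥(Submodule.span k {a1, a2} ⊓ A2), LinearMap.ker (mu.flip (b : W))) = (L, P)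
    rw [hi1, hiinf, hsnd, hLspan]
end

section
/- Let W̄ be a 6-dimensional k-vector space, μ a nondegenerate 2-form on W̄, and W̄ = L1 ⊕ L2 a direct sum decomposition into two 3-dimensional subspaces that are each μ-isotropic (a Lagrangian decomposition). Let λ̄ = λ̄1 + λ̄2 be a 3-form on W̄, where λ̄1, λ̄2 are nonzero 3-forms with λ̄1(v1,v2,v3) = 0 whenever some argument lies in L1 and λ̄2(v1,v2,v3) = 0 whenever some argument lies in L2. Set W = k ⊕ W̄, let w0 = (1,0), let w0∨ : W → k be the projection to the first summand, let p : W → W̄ be the projection to the second summand, and define the 3-form ξ on W by ξ(v1,v2,v3) = λ̄(pv1,pv2,pv3) + w0∨(v1)μ(pv2,pv3) − w0∨(v2)μ(pv1,pv3) + w0∨(v3)μ(pv1,pv2). Then ξ is a general 3-form on W: there exists a basis f0,f1,…,f6 of W such that ξ(f1,f2,f3) = ξ(f4,f5,f6) = ξ(f0,f1,f6) = ξ(f0,f2,f5) = ξ(f0,f3,f4) = 1 and ξ vanishes on every other increasing triple of basis vectors (i.e. ξ = x123 + x456 + x016 + x025 + x034 in the dual coordinates). -/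
open Module

section Helpers
variable {k : Type*} [Field k] {W : Type*} [AddCommGroup W] [Module k W]

private lemma upd2_0 (x y x' : W) : Function.update ![x, y] 0 x' = ![x', y] := by
  funext i; fin_cases i <;> simp
private lemma upd2_1 (x y y' : W) : Function.update ![x, y] 1 y' = ![x, y'] := by
  funext i; fin_cases i <;> simp
private lemma upd3_0 (x y z x' : W) : Function.update ![x, y, z] 0 x' = ![x', y, z] := by
  funext i; fin_cases i <;> simp
private lemma upd3_1 (x y z y' : W) : Function.update ![x, y, z] 1 y' = ![x, y', z] := by
  funext i; fin_cases i <;> simp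
private lemma upd3_2 (x y z z' : W) : Function.update ![x, y, z] 2 z' = ![x, y, z'] := by
  funext i; fin_cases i <;> simp

private lemma alt2_smul0 (f : AlternatingMap k W k (Fin 2)) (c : k) (x y : W) :
    f ![c • x, y] = c * f ![x, y] := by
  rw [show (![c • x, y] : Fin 2 → W) = Function.update ![x,y] 0 (c • x) from (upd2_0 ..).symm,
    f.map_update_smul, upd2_0, smul_eq_mul]
private lemma alt2_smul1 (f : AlternatingMap k W k (Fin 2)) (c : k) (x y : W) :
    f ![x, c • y] = c * f ![x, y] := by
  rw [show (![x, c • y] : Fin 2 → W) = Function.update ![x,y] 1 (c • y) from (upd2_1 ..).symm,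
    f.map_update_smul, upd2_1, smul_eq_mul]
private lemma alt2_add0 (f : AlternatingMap k W k (Fin 2)) (x x' y : W) :
    f ![x + x', y] = f ![x, y] + f ![x', y] := by
  rw [show (![x + x', y] : Fin 2 → W) = Function.update ![x,y] 0 (x + x') from (upd2_0 ..).symm,
    f.map_update_add, upd2_0, upd2_0]
private lemma alt2_swap (f : AlternatingMap k W k (Fin 2)) (x y : W) :
    f ![x, y] = - f ![y, x] := by
  have h : (![x, y] : Fin 2 → W) = ![y, x] ∘ Equiv.swap 0 1 := by
    funext i; fin_cases i <;> simp
  rw [h, f.map_swap _ (by decide)]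
private lemma alt3_smul0 (f : AlternatingMap k W k (Fin 3)) (c : k) (x y z : W) :
    f ![c • x, y, z] = c * f ![x, y, z] := by
  rw [show (![c • x, y, z] : Fin 3 → W) = Function.update ![x,y,z] 0 (c • x) from (upd3_0 ..).symm,
    f.map_update_smul, upd3_0, smul_eq_mul]
private lemma alt3_smul1 (f : AlternatingMap k W k (Fin 3)) (c : k) (x y z : W) :
    f ![x, c • y, z] = c * f ![x, y, z] := by
  rw [show (![x, c • y, z] : Fin 3 → W) = Function.update ![x,y,z] 1 (c • y) from (upd3_1 ..).symm,
    f.map_update_smul, upd3_1, smul_eq_mul]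
private lemma alt3_smul2 (f : AlternatingMap k W k (Fin 3)) (c : k) (x y z : W) :
    f ![x, y, c • z] = c * f ![x, y, z] := by
  rw [show (![x, y, c • z] : Fin 3 → W) = Function.update ![x,y,z] 2 (c • z) from (upd3_2 ..).symm,
    f.map_update_smul, upd3_2, smul_eq_mul]
private lemma alt3_rev (f : AlternatingMap k W k (Fin 3)) (x y z : W) :
    f ![z, y, x] = - f ![x, y, z] := by
  have h : (![z, y, x] : Fin 3 → W) = ![x, y, z] ∘ Equiv.swap 0 2 := by
    funext i; fin_cases i <;> simp [Equiv.swap_apply_of_ne_of_ne]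
  rw [h, f.map_swap _ (by decide)]
end Helpers

set_option maxHeartbeats 2000000 in
theorem stmt_11 (k : Type*) [Field k] [CharZero k] [IsAlgClosed k]
    (Wbar : Type*) [AddCommGroup Wbar] [Module k Wbar] [FiniteDimensional k Wbar]
    (hWbar : finrank k Wbar = 6)
    (mu : AlternatingMap k Wbar k (Fin 2))
    (hmund : ∀ v : Wbar, (∀ w : Wbar, mu ![v, w] = 0) → v = 0)
    (L1 L2 : Submodule k Wbar)
    (hL12 : L1 ⊓ L2 = ⊥) (hL12' : L1 ⊔ L2 = ⊤)
    (hL1dim : finrank k L1 = 3) (hL2dim : finrank k L2 = 3)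
    (hL1iso : ∀ u ∈ L1, ∀ v ∈ L1, mu ![u, v] = 0)
    (hL2iso : ∀ u ∈ L2, ∀ v ∈ L2, mu ![u, v] = 0)
    (lam1 lam2 : AlternatingMap k Wbar k (Fin 3))
    (hlam1ne : lam1 ≠ 0) (hlam2ne : lam2 ≠ 0)
    (hlam1 : ∀ v : Fin 3 → Wbar, (∃ i, v i ∈ L1) → lam1 v = 0)
    (hlam2 : ∀ v : Fin 3 → Wbar, (∃ i, v i ∈ L2) → lam2 v = 0)
    (lam : AlternatingMap k Wbar k (Fin 3)) (hlam : lam = lam1 + lam2)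
    (xi : (k × Wbar) → (k × Wbar) → (k × Wbar) → k)
    (hxi : ∀ v1 v2 v3 : k × Wbar, xi v1 v2 v3 =
      lam ![v1.2, v2.2, v3.2] + v1.1 * mu ![v2.2, v3.2] -
        v2.1 * mu ![v1.2, v3.2] + v3.1 * mu ![v1.2, v2.2]) :
    ∃ f : Basis (Fin 7) k (k × Wbar),
      ∀ i j l : Fin 7, i < j → j < l →
        xi (f i) (f j) (f l) =
          if (i.val, j.val, l.val) = (1,2,3) ∨
             (i.val, j.val, l.val) = (4,5,6) ∨
             (i.val, j.val, l.val) = (0,1,6) ∨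
             (i.val, j.val, l.val) = (0,2,5) ∨
             (i.val, j.val, l.val) = (0,3,4)
          then 1 else 0 := by
  classical
  have hcompl : IsCompl L1 L2 := ⟨disjoint_iff.2 hL12, codisjoint_iff.2 hL12'⟩
  set bL1 : Basis (Fin 3) k L1 := finBasisOfFinrankEq k L1 hL1dim with hbL1
  -- the pairing map
  set phi : L2 →ₗ[k] Module.Dual k L1 :=
    { toFun := fun v =>
        { toFun := fun u => mu ![(u : Wbar), (v : Wbar)]
          map_add' := by intro a b; exact alt2_add0 _ _ _ _
          map_smul' := by intro c a; simpa using alt2_smul0 mu c (a : Wbar) (v : Wbar) }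
      map_add' := by
        intro a b; ext u
        simp only [LinearMap.coe_mk, AddHom.coe_mk, LinearMap.add_apply, Submodule.coe_add]
        rw [alt2_swap, alt2_add0, alt2_swap mu ((a:Wbar)) u, alt2_swap mu ((b:Wbar)) u]; ring
      map_smul' := by
        intro c a; ext u
        simp only [LinearMap.coe_mk, AddHom.coe_mk, RingHom.id_apply, LinearMap.smul_apply,
          Submodule.coe_smul, smul_eq_mul]
        rw [alt2_smul1] } with hphi
  have hphiinj : Function.Injective phi := by
    rw [← LinearMap.ker_eq_bot, LinearMap.ker_eq_bot']
    intro v hv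
    have h1 : ∀ u ∈ L1, mu ![(u : Wbar), (v : Wbar)] = 0 := fun u hu =>
      LinearMap.congr_fun hv ⟨u, hu⟩
    have hall : ∀ w : Wbar, mu ![(v : Wbar), w] = 0 := by
      intro w
      have hw : w ∈ L1 ⊔ L2 := hL12' ▸ Submodule.mem_top
      obtain ⟨a, ha, b, hb, rfl⟩ := Submodule.mem_sup.1 hw
      rw [alt2_swap, alt2_add0, h1 a ha, hL2iso b hb (v : Wbar) v.2]; ring
    exact Subtype.ext (hmund _ hall)
  have hdimeq : finrank k L2 = finrank k (Module.Dual k L1) := by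
    rw [hL2dim, Subspace.dual_finrank_eq, hL1dim]
  set e : L2 ≃ₗ[k] Module.Dual k L1 := LinearMap.linearEquivOfInjective phi hphiinj hdimeq with he
  set cL2 : Basis (Fin 3) k L2 := (bL1.dualBasis).map e.symm with hcL2
  set u : Fin 3 → Wbar := fun i => (bL1 i : Wbar) with hu
  set w : Fin 3 → Wbar := fun i => (cL2 i : Wbar) with hw
  have hmemu : ∀ i, u i ∈ L1 := fun i => (bL1 i).2
  have hmemw : ∀ i, w i ∈ L2 := fun i => (cL2 i).2
  have hdual : ∀ i j : Fin 3, mu ![u i, w j] = if i = j then 1 else 0 := by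
    intro i j
    have h1 : phi (cL2 j) = bL1.dualBasis j := by
      have : e (cL2 j) = bL1.dualBasis j := by rw [hcL2]; simp
      rw [← this, he]; rfl
    have h2 : phi (cL2 j) (bL1 i) = bL1.dualBasis j (bL1 i) := by rw [h1]
    rw [Basis.dualBasis_apply_self] at h2
    rw [show mu ![u i, w j] = phi (cL2 j) (bL1 i) from rfl, h2]
  -- the full basis of Wbar
  set gB : Basis (Fin 3 ⊕ Fin 3) k Wbar :=
    (bL1.prod cL2).map (Submodule.prodEquivOfIsCompl L1 L2 hcompl) with hgB
  have hgBl : ∀ i, gB (Sum.inl i) = u i := by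
    intro i
    rw [hgB, Basis.map_apply]
    have : (bL1.prod cL2) (Sum.inl i) = (bL1 i, (0 : L2)) :=
      Prod.ext (Basis.prod_apply_inl_fst ..) (Basis.prod_apply_inl_snd ..)
    rw [this, Submodule.coe_prodEquivOfIsCompl']; simp [hu]
  have hgBr : ∀ i, gB (Sum.inr i) = w i := by
    intro i
    rw [hgB, Basis.map_apply]
    have : (bL1.prod cL2) (Sum.inr i) = ((0 : L1), cL2 i) :=
      Prod.ext (Basis.prod_apply_inr_fst ..) (Basis.prod_apply_inr_snd ..)
    rw [this, Submodule.coe_prodEquivOfIsCompl']; simp [hw]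
  -- nonvanishing constants
  set c1 : k := lam1 w with hc1def
  set c2 : k := lam2 u with hc2def
  have hc1ne : c1 ≠ 0 := by
    intro h0
    apply hlam1ne
    refine gB.ext_alternating fun v hv => ?_
    rw [AlternatingMap.zero_apply]
    by_cases hin : ∃ i j, v i = Sum.inl j
    · obtain ⟨i, j, hij⟩ := hin
      exact hlam1 _ ⟨i, by rw [hij, hgBl]; exact hmemu j⟩
    · push_neg at hin
      set sf : Fin 3 → Fin 3 := fun i => Sum.elim id id (v i) with hsf
      have hvr : ∀ i, v i = Sum.inr (sf i) := by
        intro i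
        rcases hvi : v i with j | j
        · exact absurd hvi (hin i j)
        · rw [hsf]; simp [hvi]
      have hsinj : Function.Injective sf := by
        intro a b hab
        apply hv
        rw [hvr a, hvr b, hab]
      set sigma : Equiv.Perm (Fin 3) :=
        Equiv.ofBijective sf (Finite.injective_iff_bijective.1 hsinj) with hsigma
      have hcomp : (fun i => gB (v i)) = w ∘ sigma := by
        funext i
        rw [hvr i, hgBr]; rfl
      rw [hcomp, lam1.map_perm w sigma, ← hc1def, h0, smul_zero]
  have hc2ne : c2 ≠ 0 := by
    intro h0
    apply hlam2ne
    refine gB.ext_alternating fun v hv => ?_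
    rw [AlternatingMap.zero_apply]
    by_cases hin : ∃ i j, v i = Sum.inr j
    · obtain ⟨i, j, hij⟩ := hin
      exact hlam2 _ ⟨i, by rw [hij, hgBr]; exact hmemw j⟩
    · push_neg at hin
      set sf : Fin 3 → Fin 3 := fun i => Sum.elim id id (v i) with hsf
      have hvr : ∀ i, v i = Sum.inl (sf i) := by
        intro i
        rcases hvi : v i with j | j
        · rw [hsf]; simp [hvi]
        · exact absurd hvi (hin i j)
      have hsinj : Function.Injective sf := by
        intro a b hab
        apply hv
        rw [hvr a, hvr b, hab]
      set sigma : Equiv.Perm (Fin 3) :=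
        Equiv.ofBijective sf (Finite.injective_iff_bijective.1 hsinj) with hsigma
      have hcomp : (fun i => gB (v i)) = u ∘ sigma := by
        funext i
        rw [hvr i, hgBl]; rfl
      rw [hcomp, lam2.map_perm u sigma, ← hc2def, h0, smul_zero]
  -- choose the cube root
  obtain ⟨s, hs⟩ := IsAlgClosed.exists_pow_nat_eq (k := k) (-(c1 * c2)⁻¹) (n := 3) (by norm_num)
  have hsne : s ≠ 0 := by
    intro h
    apply inv_ne_zero (mul_ne_zero hc1ne hc2ne)
    have h2 := hs
    rw [h, zero_pow (by norm_num : (3:ℕ) ≠ 0)] at h2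
    exact neg_eq_zero.1 h2.symm
  -- build the basis of k × Wbar
  set bK : Basis (Fin 1) k k := Basis.singleton (Fin 1) k with hbK
  set gB6 : Basis (Fin 6) k Wbar := gB.reindex finSumFinEquiv with hgB6
  set B7 : Basis (Fin 7) k (k × Wbar) := (bK.prod gB6).reindex finSumFinEquiv with hB7
  set B7' : Basis (Fin 7) k (k × Wbar) := B7.reindex (Equiv.swap (4 : Fin 7) 6) with hB7'
  set uv : Fin 7 → kˣ :=
    ![Units.mk0 s⁻¹ (inv_ne_zero hsne), Units.mk0 c2⁻¹ (inv_ne_zero hc2ne), 1, 1,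
      Units.mk0 s hsne, Units.mk0 s hsne, Units.mk0 (s * c2) (mul_ne_zero hsne hc2ne)] with huv
  set F : Basis (Fin 7) k (k × Wbar) := B7'.unitsSMul uv with hF
  -- the explicit vectors
  set Vv : Fin 7 → k × Wbar :=
    ![((s⁻¹ : k), (0 : Wbar)), (0, c2⁻¹ • u 0), (0, u 1), (0, u 2),
      (0, s • w 2), (0, s • w 1), (0, (s * c2) • w 0)] with hVv
  have hB7v : ∀ (j : Fin 7) (m : Fin 1 ⊕ Fin 6), finSumFinEquiv.symm j = m →
      B7 j = (bK.prod gB6) m := by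
    intro j m hm; rw [hB7, Basis.reindex_apply, hm]
  have hgB6v : ∀ (j : Fin 6) (m : Fin 3 ⊕ Fin 3), finSumFinEquiv.symm j = m →
      gB6 j = gB m := by
    intro j m hm; rw [hgB6, Basis.reindex_apply, hm]
  have hprodl : (bK.prod gB6) (Sum.inl 0) = ((1 : k), (0 : Wbar)) := by
    refine Prod.ext ?_ ?_
    · rw [Basis.prod_apply_inl_fst, hbK, Basis.singleton_apply]
    · exact Basis.prod_apply_inl_snd ..
  have hprodr : ∀ j : Fin 6, (bK.prod gB6) (Sum.inr j) = ((0 : k), gB6 j) := by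
    intro j
    exact Prod.ext (Basis.prod_apply_inr_fst ..) (Basis.prod_apply_inr_snd ..)
  have hFV : ∀ i : Fin 7, F i = Vv i := by
    intro i
    fin_cases i
    all_goals rw [hF, Basis.unitsSMul_apply, hB7', Basis.reindex_apply, Equiv.symm_swap]
    · show uv 0 • B7 (Equiv.swap (4 : Fin 7) 6 0) = Vv 0
      rw [show (Equiv.swap (4 : Fin 7) 6) 0 = 0 from by decide,
        hB7v 0 (Sum.inl 0) (by decide), hprodl]
      show (Units.mk0 s⁻¹ (inv_ne_zero hsne) : k) • ((1 : k), (0 : Wbar)) = _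
      simp [hVv, Prod.smul_def, Matrix.cons_val_succ] <;> try rfl
    · show uv 1 • B7 (Equiv.swap (4 : Fin 7) 6 1) = Vv 1
      rw [show (Equiv.swap (4 : Fin 7) 6) 1 = 1 from by decide,
        hB7v 1 (Sum.inr 0) (by decide), hprodr, hgB6v 0 (Sum.inl 0) (by decide), hgBl]
      show (Units.mk0 c2⁻¹ (inv_ne_zero hc2ne) : k) • ((0 : k), u 0) = _
      simp [hVv, Prod.smul_def, Matrix.cons_val_succ] <;> try rfl
    · show uv 2 • B7 (Equiv.swap (4 : Fin 7) 6 2) = Vv 2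
      rw [show (Equiv.swap (4 : Fin 7) 6) 2 = 2 from by decide,
        hB7v 2 (Sum.inr 1) (by decide), hprodr, hgB6v 1 (Sum.inl 1) (by decide), hgBl]
      show ((1 : kˣ) : k) • ((0 : k), u 1) = _
      simp [hVv, Prod.smul_def, Matrix.cons_val_succ] <;> try rfl
    · show uv 3 • B7 (Equiv.swap (4 : Fin 7) 6 3) = Vv 3
      rw [show (Equiv.swap (4 : Fin 7) 6) 3 = 3 from by decide,
        hB7v 3 (Sum.inr 2) (by decide), hprodr, hgB6v 2 (Sum.inl 2) (by decide), hgBl]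
      show ((1 : kˣ) : k) • ((0 : k), u 2) = _
      simp [hVv, Prod.smul_def, Matrix.cons_val_succ] <;> try rfl
    · show uv 4 • B7 (Equiv.swap (4 : Fin 7) 6 4) = Vv 4
      rw [show (Equiv.swap (4 : Fin 7) 6) 4 = 6 from by decide,
        hB7v 6 (Sum.inr 5) (by decide), hprodr, hgB6v 5 (Sum.inr 2) (by decide), hgBr]
      show (Units.mk0 s hsne : k) • ((0 : k), w 2) = _
      simp [hVv, Prod.smul_def, Matrix.cons_val_succ] <;> try rfl
    · show uv 5 • B7 (Equiv.swap (4 : Fin 7) 6 5) = Vv 5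
      rw [show (Equiv.swap (4 : Fin 7) 6) 5 = 5 from by decide,
        hB7v 5 (Sum.inr 4) (by decide), hprodr, hgB6v 4 (Sum.inr 1) (by decide), hgBr]
      show (Units.mk0 s hsne : k) • ((0 : k), w 1) = _
      simp [hVv, Prod.smul_def, Matrix.cons_val_succ] <;> try rfl
    · show uv 6 • B7 (Equiv.swap (4 : Fin 7) 6 6) = Vv 6
      rw [show (Equiv.swap (4 : Fin 7) 6) 6 = 4 from by decide,
        hB7v 4 (Sum.inr 3) (by decide), hprodr, hgB6v 3 (Sum.inr 0) (by decide), hgBr]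
      show (Units.mk0 (s * c2) (mul_ne_zero hsne hc2ne) : k) • ((0 : k), w 0) = _
      simp [hVv, Prod.smul_def, Matrix.cons_val_succ] <;> try rfl
  -- the value tables
  have hmuuu : ∀ i j : Fin 3, mu ![u i, u j] = 0 := fun i j =>
    hL1iso _ (hmemu i) _ (hmemu j)
  have hmuww : ∀ i j : Fin 3, mu ![w i, w j] = 0 := fun i j =>
    hL2iso _ (hmemw i) _ (hmemw j)
  have hmu0 : ∀ y : Wbar, mu ![0, y] = 0 := fun y => mu.map_coord_zero 0 rfl
  have hlamz0 : ∀ y z : Wbar, lam ![0, y, z] = 0 := fun y z => lam.map_coord_zero 0 rfl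
  have huvec : (![u 0, u 1, u 2] : Fin 3 → Wbar) = u := by
    funext i; fin_cases i <;> rfl
  have hwvec : (![w 0, w 1, w 2] : Fin 3 → Wbar) = w := by
    funext i; fin_cases i <;> rfl
  have hlamuuu : lam ![u 0, u 1, u 2] = c2 := by
    rw [hlam, AlternatingMap.add_apply, hlam1 ![u 0, u 1, u 2] ⟨0, hmemu 0⟩, huvec, ← hc2def, zero_add]
  have hlamwww : lam ![w 2, w 1, w 0] = -c1 := by
    rw [hlam, AlternatingMap.add_apply, hlam2 ![w 2, w 1, w 0] ⟨0, hmemw 2⟩, add_zero, alt3_rev, hwvec,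
      ← hc1def]
  have hlam_uuw : ∀ a b c : Fin 3, lam ![u a, u b, w c] = 0 := by
    intro a b c
    rw [hlam, AlternatingMap.add_apply, hlam1 ![u a, u b, w c] ⟨0, hmemu a⟩, hlam2 ![u a, u b, w c] ⟨2, hmemw c⟩, add_zero]
  have hlam_uww : ∀ a b c : Fin 3, lam ![u a, w b, w c] = 0 := by
    intro a b c
    rw [hlam, AlternatingMap.add_apply, hlam1 ![u a, w b, w c] ⟨0, hmemu a⟩,
      hlam2 ![u a, w b, w c] ⟨2, hmemw c⟩, add_zero]
  have hs3 : s ^ 3 * (c1 * c2) = -1 := by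
    rw [hs]; field_simp
  -- finish
  refine ⟨F, ?_⟩
  intro i j l hij hjl
  rw [hFV i, hFV j, hFV l, hxi]
  fin_cases i <;> fin_cases j <;> fin_cases l <;>
    first
      | exact absurd hij (by decide)
      | exact absurd hjl (by decide)
      | (norm_num [hVv, Matrix.cons_val_succ, alt3_smul0, alt3_smul1, alt3_smul2,
          alt2_smul0, alt2_smul1, hlamz0, hmu0, hmuuu, hmuww, hdual, hlam_uuw, hlam_uww,
          hlamuuu, hlamwww, hc1ne, hc2ne, hsne]
         <;> first
           | ring1
           | decide
           | linear_combination hs3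
           | linear_combination -hs3
           | linear_combination (s⁻¹ * c2⁻¹) * hs3
           | (field_simp; try ring))
end

section
/- Let W̄ be a 6-dimensional k-vector space with a nondegenerate 2-form μ, and let λ̄ be any 3-form on W̄. Set W = k ⊕ W̄, w0 = (1,0), w0∨ : W → k the first projection, p : W → W̄ the second projection, and define the 3-form ξ on W by ξ(v1,v2,v3) = λ̄(pv1,pv2,pv3) + w0∨(v1)μ(pv2,pv3) − w0∨(v2)μ(pv1,pv3) + w0∨(v3)μ(pv1,pv2). Then for any two linearly independent vectors u', u'' ∈ W̄, the three linear forms ξ(w0,u',·), ξ(w0,u'',·), ξ(u',u'',·) on W are linearly dependent if and only if μ(u',u'') = 0 and the linear form λ̄(u',u'',·) on W̄ lies in the span of the linear forms μ(u',·) and μ(u'',·). (Degeneracy criterion from the proof of the paper's Proposition identifying D_{λ̄,μ} with the G2-adjoint variety.) -/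
open Module

/-- degeneracy criterion on `LGr_μ(2,W̄)`: for the 3-form
`ξ = λ̄ + w0∨ ∧ μ` on `W = k ⊕ W̄` and linearly independent `u', u'' ∈ W̄`, the
three linear forms `ξ(w0,u',·), ξ(w0,u'',·), ξ(u',u'',·)` on `W` are linearly
dependent iff `μ(u',u'') = 0` and `λ̄(u',u'',·)` lies in the span of `μ(u',·)`
and `μ(u'',·)`. -/
theorem stmt_12 (k : Type*) [Field k] [CharZero k]
    (Wbar : Type*) [AddCommGroup Wbar] [Module k Wbar] [FiniteDimensional k Wbar]
    (hWbar : finrank k Wbar = 6)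
    (mu : AlternatingMap k Wbar k (Fin 2))
    (hmund : ∀ v : Wbar, (∀ w : Wbar, mu ![v, w] = 0) → v = 0)
    (lam : AlternatingMap k Wbar k (Fin 3))
    (xi : (k × Wbar) → (k × Wbar) → (k × Wbar) → k)
    (hxi : ∀ v1 v2 v3 : k × Wbar, xi v1 v2 v3 =
      lam ![v1.2, v2.2, v3.2] + v1.1 * mu ![v2.2, v3.2] -
        v2.1 * mu ![v1.2, v3.2] + v3.1 * mu ![v1.2, v2.2]) :
    ∀ u' u'' : Wbar, LinearIndependent k ![u', u''] →
      ((∃ c1 c2 c3 : k, ¬(c1 = 0 ∧ c2 = 0 ∧ c3 = 0) ∧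
          ∀ v : k × Wbar,
            c1 * xi ((1 : k), (0 : Wbar)) ((0 : k), u') v +
            c2 * xi ((1 : k), (0 : Wbar)) ((0 : k), u'') v +
            c3 * xi ((0 : k), u') ((0 : k), u'') v = 0) ↔
        (mu ![u', u''] = 0 ∧
          ∃ c1 c2 : k, ∀ w : Wbar,
            lam ![u', u'', w] = c1 * mu ![u', w] + c2 * mu ![u'', w])) := by
  intro u' u'' hind
  -- basic vanishing lemmas
  have hmu0r : ∀ v : Wbar, mu ![v, 0] = 0 := by
    intro v
    have h : (![v, (0:Wbar)]) = Function.update ![v, v] 1 (0:Wbar) := by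
      ext i; fin_cases i <;> simp
    rw [h]; exact mu.map_update_zero _ _
  have hmu0l : ∀ v : Wbar, mu ![(0:Wbar), v] = 0 := by
    intro v
    have h : (![(0:Wbar), v]) = Function.update ![v, v] 0 (0:Wbar) := by
      ext i; fin_cases i <;> simp
    rw [h]; exact mu.map_update_zero _ _
  have hlam0l : ∀ x y : Wbar, lam ![(0:Wbar), x, y] = 0 := by
    intro x y
    have h : (![(0:Wbar), x, y]) = Function.update ![x, x, y] 0 (0:Wbar) := by
      ext i; fin_cases i <;> simp
    rw [h]; exact lam.map_update_zero _ _
  have hlam0r : ∀ x y : Wbar, lam ![x, y, (0:Wbar)] = 0 := by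
    intro x y
    have h : (![x, y, (0:Wbar)]) = Function.update ![x, y, x] 2 (0:Wbar) := by
      ext i; fin_cases i <;> simp
    rw [h]; exact lam.map_update_zero _ _
  have hmulin : ∀ (a b : k) (x y w : Wbar),
      mu ![a • x + b • y, w] = a * mu ![x, w] + b * mu ![y, w] := by
    intro a b x y w
    have h : ∀ z : Wbar, (![z, w]) = Function.update ![x, w] 0 z := by
      intro z; ext i; fin_cases i <;> simp
    rw [h, mu.map_update_add, mu.map_update_smul, mu.map_update_smul,
      ← h x, ← h y, smul_eq_mul, smul_eq_mul]
  -- the three linear forms computed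
  have hx1 : ∀ v : k × Wbar, xi ((1:k), (0:Wbar)) ((0:k), u') v = mu ![u', v.2] := by
    intro v; rw [hxi]; simp [hlam0l, hmu0l]
  have hx2 : ∀ v : k × Wbar, xi ((1:k), (0:Wbar)) ((0:k), u'') v = mu ![u'', v.2] := by
    intro v; rw [hxi]; simp [hlam0l, hmu0l]
  have hx3 : ∀ v : k × Wbar, xi ((0:k), u') ((0:k), u'') v =
      lam ![u', u'', v.2] + v.1 * mu ![u', u''] := by
    intro v; rw [hxi]; ring
  constructor
  · rintro ⟨c1, c2, c3, hne, h⟩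
    have hw : ∀ w : Wbar,
        c1 * mu ![u', w] + c2 * mu ![u'', w] + c3 * lam ![u', u'', w] = 0 := by
      intro w
      have := h ((0:k), w)
      rw [hx1, hx2, hx3] at this
      linear_combination this
    have h1 : c3 * mu ![u', u''] = 0 := by
      have := h ((1:k), (0:Wbar))
      rw [hx1, hx2, hx3] at this
      simp only [hmu0r, hlam0r] at this
      linear_combination this
    have hc3 : c3 ≠ 0 := by
      intro hc3
      have hz : ∀ w : Wbar, mu ![c1 • u' + c2 • u'', w] = 0 := by
        intro w
        rw [hmulin]
        have := hw w
        rw [hc3] at this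
        linear_combination this
      have h0 := hmund _ hz
      obtain ⟨h1', h2'⟩ := (LinearIndependent.pair_iff.mp hind) c1 c2 h0
      exact hne ⟨h1', h2', hc3⟩
    have hmu : mu ![u', u''] = 0 := (mul_eq_zero.mp h1).resolve_left hc3
    refine ⟨hmu, -c1 / c3, -c2 / c3, fun w => ?_⟩
    have hww := hw w
    rw [div_mul_eq_mul_div, div_mul_eq_mul_div, ← add_div, eq_div_iff hc3]
    linear_combination hww
  · rintro ⟨hmu, d1, d2, hl⟩
    refine ⟨-d1, -d2, 1, fun hcon => one_ne_zero hcon.2.2, fun v => ?_⟩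
    rw [hx1, hx2, hx3, hl v.2, hmu]
    ring
end

section
/- Let W be a 7-dimensional k-vector space, ξ a 3-form on W, and w0 ∈ W a nonzero vector such that {v ∈ W : ξ(w0,v,w) = 0 for all w ∈ W} = span{w0} (i.e. the 2-form ξ(w0,·,·) has rank 6). Say a 2-dimensional subspace U2 ⊆ W is annihilated by ξ if ξ(u,u',w) = 0 for all u,u' ∈ U2 and all w ∈ W. Then: (1) no 2-dimensional subspace annihilated by ξ contains w0; (2) every 3-dimensional subspace U3 ⊆ W containing w0 contains at most one 2-dimensional subspace annihilated by ξ. (This combines the paper's Remark that points off the quadric lie on no 2-space of the adjoint variety with the claim D2(ξ̂) = ∅.) -/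
open Module

lemma update_head {W : Type*} [AddCommGroup W] (x y z w : W) :
    Function.update ![x, z, w] 0 y = ![y, z, w] := by
  ext i
  fin_cases i <;> simp

lemma xi_add_left {k W : Type*} [Field k] [AddCommGroup W] [Module k W]
    (xi : AlternatingMap k W k (Fin 3)) (a b z w : W) :
    xi ![a + b, z, w] = xi ![a, z, w] + xi ![b, z, w] := by
  have := xi.map_update_add ![a, z, w] 0 a b
  simpa [update_head] using this

/-- for a 3-form `ξ` on a 7-space `W` and `w0 ≠ 0` with
`{v : ξ(w0,v,·) = 0} = span{w0}`: (1) no 2-subspace annihilated by `ξ` contains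
`w0`; (2) every 3-subspace containing `w0` contains at most one 2-subspace
annihilated by `ξ`. -/
theorem stmt_13 (k : Type*) [Field k] [CharZero k]
    (W : Type*) [AddCommGroup W] [Module k W] [FiniteDimensional k W]
    (hW : finrank k W = 7)
    (xi : AlternatingMap k W k (Fin 3))
    (w0 : W) (hw0 : w0 ≠ 0)
    (hker : ∀ v : W, (∀ w : W, xi ![w0, v, w] = 0) ↔ v ∈ Submodule.span k {w0}) :
    (∀ U2 : Submodule k W, finrank k U2 = 2 →
      (∀ u ∈ U2, ∀ u' ∈ U2, ∀ w : W, xi ![u, u', w] = 0) → w0 ∉ U2) ∧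
    (∀ U3 : Submodule k W, finrank k U3 = 3 → w0 ∈ U3 →
      ∀ U2 U2' : Submodule k W,
        U2 ≤ U3 → finrank k U2 = 2 →
          (∀ u ∈ U2, ∀ u' ∈ U2, ∀ w : W, xi ![u, u', w] = 0) →
        U2' ≤ U3 → finrank k U2' = 2 →
          (∀ u ∈ U2', ∀ u' ∈ U2', ∀ w : W, xi ![u, u', w] = 0) →
        U2 = U2') := by
  have part1 : ∀ U2 : Submodule k W, finrank k U2 = 2 →
      (∀ u ∈ U2, ∀ u' ∈ U2, ∀ w : W, xi ![u, u', w] = 0) → w0 ∉ U2 := by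
    intro U2 hdim hann hmem
    -- U2 is not contained in span{w0}
    have hspan : finrank k (Submodule.span k ({w0} : Set W)) = 1 :=
      finrank_span_singleton hw0
    have : ¬ U2 ≤ Submodule.span k ({w0} : Set W) := by
      intro hle
      have := Submodule.finrank_mono hle
      omega
    obtain ⟨u, huU, huns⟩ := SetLike.not_le_iff_exists.mp this
    exact huns ((hker u).mp (fun w => hann w0 hmem u huU w))
  refine ⟨part1, ?_⟩
  intro U3 hd3 hw0U3 U2 U2' hle hdim hann hle' hdim' hann'
  by_contra hne
  -- U2 ⊔ U2' = U3
  have hsup_le : U2 ⊔ U2' ≤ U3 := sup_le hle hle'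
  have hlt : U2 < U2 ⊔ U2' := by
    refine lt_of_le_of_ne le_sup_left ?_
    intro h
    apply hne
    have h2 : U2' ≤ U2 := le_sup_right.trans h.ge
    exact (Submodule.eq_of_le_of_finrank_eq h2 (by omega)).symm
  have hsup_rank : 3 ≤ finrank k ↥(U2 ⊔ U2') := by
    have := Submodule.finrank_lt_finrank_of_lt hlt
    omega
  have hsup_le_rank : finrank k ↥(U2 ⊔ U2') ≤ 3 := hd3 ▸ Submodule.finrank_mono hsup_le
  have hsup : U2 ⊔ U2' = U3 :=
    Submodule.eq_of_le_of_finrank_eq hsup_le (by omega)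
  -- intersection has dimension 1
  have hinf : finrank k ↥(U2 ⊓ U2') = 1 := by
    have := Submodule.finrank_sup_add_finrank_inf_eq U2 U2'
    rw [hsup, hd3] at this
    omega
  have hinf_ne : U2 ⊓ U2' ≠ ⊥ := by
    intro h
    rw [h, finrank_bot] at hinf
    omega
  obtain ⟨z, hz, hzne⟩ := Submodule.exists_mem_ne_zero_of_ne_bot hinf_ne
  -- w0 = u + u'
  have : w0 ∈ U2 ⊔ U2' := hsup ▸ hw0U3
  obtain ⟨u, hu, u', hu', huu⟩ := Submodule.mem_sup.mp this
  -- ξ(w0, z, w) = 0 for all w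
  have hzker : ∀ w : W, xi ![w0, z, w] = 0 := by
    intro w
    rw [← huu, xi_add_left]
    rw [hann u hu z hz.1 w, hann' u' hu' z hz.2 w, add_zero]
  have hzspan : z ∈ Submodule.span k ({w0} : Set W) := (hker z).mp hzker
  obtain ⟨c, hc⟩ := Submodule.mem_span_singleton.mp hzspan
  have hcne : c ≠ 0 := by rintro rfl; simp at hc; exact hzne hc.symm
  have hw0U2 : w0 ∈ U2 := by
    have : w0 = c⁻¹ • z := by rw [← hc, smul_smul, inv_mul_cancel₀ hcne, one_smul]
    rw [this]
    exact U2.smul_mem _ hz.1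
  exact part1 U2 hdim hann hw0U2
end

section
/- Let W̄ be a 6-dimensional k-vector space with a nondegenerate 2-form μ, and let λ̄ be any 3-form on W̄. Set W = k ⊕ W̄, w0 = (1,0), w0∨ : W → k the first projection, p : W → W̄ the second projection, and define the 3-form ξ on W by ξ(v1,v2,v3) = λ̄(pv1,pv2,pv3) + w0∨(v1)μ(pv2,pv3) − w0∨(v2)μ(pv1,pv3) + w0∨(v3)μ(pv1,pv2). Then the map U2 ↦ p(U2) is a bijection from the set of 2-dimensional subspaces U2 ⊆ W annihilated by ξ (i.e. ξ(u,u',w) = 0 for all u,u' ∈ U2 and all w ∈ W) onto the set of 2-dimensional subspaces Ū2 ⊆ W̄ such that μ vanishes on Ū2 and, for one (equivalently any) basis u', u'' of Ū2, the linear form λ̄(u',u'',·) on W̄ lies in the span of μ(u',·) and μ(u'',·). (Set-theoretic form of the paper's Proposition: the zero locus D_{λ̄,μ} ⊂ LGr_μ(2,W̄) is isomorphic to the G2-adjoint variety Gr_ξ(2,W).) -/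
set_option linter.unusedSectionVars false
set_option linter.deprecated false
set_option maxHeartbeats 1000000
open Module

section helpers
variable {k V : Type*} [Field k] [AddCommGroup V] [Module k V]

lemma upd3_0_s14 (a b c x : V) : Function.update ![a,b,c] 0 x = ![x,b,c] := by
  funext i; fin_cases i <;> simp

lemma upd3_1_s14 (a b c x : V) : Function.update ![a,b,c] 1 x = ![a,x,c] := by
  funext i; fin_cases i <;> simp

lemma upd2_0_s14 (a b x : V) : Function.update ![a,b] 0 x = ![x,b] := by
  funext i; fin_cases i <;> simp

lemma upd2_1_s14 (a b x : V) : Function.update ![a,b] 1 x = ![a,x] := by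
  funext i; fin_cases i <;> simp

lemma lam_lin0 (f : AlternatingMap k V k (Fin 3)) (a b : k) (x y z t : V) :
    f ![a•x + b•y, z, t] = a * f ![x,z,t] + b * f ![y,z,t] := by
  have h := f.map_update_add ![x,z,t] 0 (a•x) (b•y)
  rw [upd3_0_s14, upd3_0_s14, upd3_0_s14] at h
  have h1 := f.map_update_smul ![x,z,t] 0 a x
  rw [upd3_0_s14, upd3_0_s14] at h1
  have h2 := f.map_update_smul ![y,z,t] 0 b y
  rw [upd3_0_s14, upd3_0_s14] at h2
  simp only [smul_eq_mul] at h1 h2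
  rw [h, h1, h2]

lemma lam_lin1 (f : AlternatingMap k V k (Fin 3)) (a b : k) (x y z t : V) :
    f ![z, a•x + b•y, t] = a * f ![z,x,t] + b * f ![z,y,t] := by
  have h := f.map_update_add ![z,x,t] 1 (a•x) (b•y)
  rw [upd3_1_s14, upd3_1_s14, upd3_1_s14] at h
  have h1 := f.map_update_smul ![z,x,t] 1 a x
  rw [upd3_1_s14, upd3_1_s14] at h1
  have h2 := f.map_update_smul ![z,y,t] 1 b y
  rw [upd3_1_s14, upd3_1_s14] at h2
  simp only [smul_eq_mul] at h1 h2
  rw [h, h1, h2]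

lemma mu_lin0 (f : AlternatingMap k V k (Fin 2)) (a b : k) (x y z : V) :
    f ![a•x + b•y, z] = a * f ![x,z] + b * f ![y,z] := by
  have h := f.map_update_add ![x,z] 0 (a•x) (b•y)
  rw [upd2_0_s14, upd2_0_s14, upd2_0_s14] at h
  have h1 := f.map_update_smul ![x,z] 0 a x
  rw [upd2_0_s14, upd2_0_s14] at h1
  have h2 := f.map_update_smul ![y,z] 0 b y
  rw [upd2_0_s14, upd2_0_s14] at h2
  simp only [smul_eq_mul] at h1 h2
  rw [h, h1, h2]

lemma mu_lin1 (f : AlternatingMap k V k (Fin 2)) (a b : k) (x y z : V) :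
    f ![z, a•x + b•y] = a * f ![z,x] + b * f ![z,y] := by
  have h := f.map_update_add ![z,x] 1 (a•x) (b•y)
  rw [upd2_1_s14, upd2_1_s14, upd2_1_s14] at h
  have h1 := f.map_update_smul ![z,x] 1 a x
  rw [upd2_1_s14, upd2_1_s14] at h1
  have h2 := f.map_update_smul ![z,y] 1 b y
  rw [upd2_1_s14, upd2_1_s14] at h2
  simp only [smul_eq_mul] at h1 h2
  rw [h, h1, h2]

lemma lam_alt01 (f : AlternatingMap k V k (Fin 3)) (x z : V) : f ![x, x, z] = 0 := by
  apply f.map_eq_zero_of_eq _ (i := 0) (j := 1) <;> simp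

lemma mu_alt (f : AlternatingMap k V k (Fin 2)) (x : V) : f ![x, x] = 0 := by
  apply f.map_eq_zero_of_eq _ (i := 0) (j := 1) <;> simp

lemma lam_zero0 (f : AlternatingMap k V k (Fin 3)) (y z : V) : f ![0, y, z] = 0 := by
  have := f.toMultilinearMap.map_coord_zero (m := ![0, y, z]) 0 (by simp)
  simpa using this

lemma lam_zero2 (f : AlternatingMap k V k (Fin 3)) (x y : V) : f ![x, y, 0] = 0 := by
  have := f.toMultilinearMap.map_coord_zero (m := ![x, y, 0]) 2 (by simp)
  simpa using this

lemma mu_zero0 (f : AlternatingMap k V k (Fin 2)) (x : V) : f ![0, x] = 0 := by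
  have := f.toMultilinearMap.map_coord_zero (m := ![0, x]) 0 (by simp)
  simpa using this

lemma mu_zero1 (f : AlternatingMap k V k (Fin 2)) (x : V) : f ![x, 0] = 0 := by
  have := f.toMultilinearMap.map_coord_zero (m := ![x, 0]) 1 (by simp)
  simpa using this

lemma exists_basis_two [FiniteDimensional k V] (U : Submodule k V) (h : finrank k U = 2) :
    ∃ u1 u2 : V, u1 ∈ U ∧ u2 ∈ U ∧ LinearIndependent k ![u1, u2] ∧
      U = Submodule.span k {u1, u2} := by
  let b : Basis (Fin 2) k U := (finBasis k U).reindex (finCongr h)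
  refine ⟨b 0, b 1, (b 0).2, (b 1).2, ?_, ?_⟩
  · have hli : LinearIndependent k fun i => (U.subtype (b i) : V) :=
      b.linearIndependent.map' U.subtype (Submodule.ker_subtype U)
    have : (fun i => (U.subtype (b i) : V)) = ![(b 0 : V), (b 1 : V)] := by
      funext i; fin_cases i <;> rfl
    rwa [this] at hli
  · have hrange : Set.range b = {b 0, b 1} := by
      ext x; simp [Fin.exists_fin_two]; tauto
    have h3 : Submodule.span k ({b 0, b 1} : Set U) = ⊤ := by rw [← hrange, b.span_eq]
    have h4 : Submodule.map U.subtype (Submodule.span k ({b 0, b 1} : Set U)) = U := by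
      rw [h3, Submodule.map_top, Submodule.range_subtype]
    rw [Submodule.map_span] at h4
    have h6 : (⇑U.subtype '' ({b 0, b 1} : Set ↥U) : Set V) = {(↑(b 0) : V), ↑(b 1)} := by
      simp [Set.image_insert_eq]
    rw [h6] at h4
    exact h4.symm

lemma finrank_span_pair {u1 u2 : V} (h : LinearIndependent k ![u1, u2]) :
    finrank k (Submodule.span k {u1, u2}) = 2 := by
  have := finrank_span_eq_card (R := k) h
  simp only [Fintype.card_fin] at this
  have hr : Set.range ![u1, u2] = {u1, u2} := by
    ext x; simp [Fin.exists_fin_two]; tauto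
  rw [hr] at this
  simpa using this

end helpers

/-- for the 3-form `ξ = λ̄ + w0∨ ∧ μ` on `W = k ⊕ W̄`, the
projection `p : W → W̄` induces a bijection from the set of 2-subspaces of `W`
annihilated by `ξ` onto the set of μ-isotropic 2-subspaces `Ū2 ⊆ W̄` such that
for any basis `u', u''` the form `λ̄(u',u'',·)` lies in the span of `μ(u',·)`
and `μ(u'',·)` (the identification `D_{λ̄,μ} ≅ Gr_ξ(2,W)`). -/
theorem stmt_14 (k : Type*) [Field k] [CharZero k]
    (Wbar : Type*) [AddCommGroup Wbar] [Module k Wbar] [FiniteDimensional k Wbar]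
    (hWbar : finrank k Wbar = 6)
    (mu : AlternatingMap k Wbar k (Fin 2))
    (hmund : ∀ v : Wbar, (∀ w : Wbar, mu ![v, w] = 0) → v = 0)
    (lam : AlternatingMap k Wbar k (Fin 3))
    (xi : (k × Wbar) → (k × Wbar) → (k × Wbar) → k)
    (hxi : ∀ v1 v2 v3 : k × Wbar, xi v1 v2 v3 =
      lam ![v1.2, v2.2, v3.2] + v1.1 * mu ![v2.2, v3.2] -
        v2.1 * mu ![v1.2, v3.2] + v3.1 * mu ![v1.2, v2.2]) :
    Set.BijOn
      (fun U2 : Submodule k (k × Wbar) =>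
        Submodule.map (LinearMap.snd k k Wbar) U2)
      {U2 : Submodule k (k × Wbar) | finrank k U2 = 2 ∧
        ∀ u ∈ U2, ∀ u' ∈ U2, ∀ w : k × Wbar, xi u u' w = 0}
      {V2 : Submodule k Wbar | finrank k V2 = 2 ∧
        (∀ u ∈ V2, ∀ u' ∈ V2, mu ![u, u'] = 0) ∧
        (∀ u' u'' : Wbar, u' ∈ V2 → u'' ∈ V2 →
          LinearIndependent k ![u', u''] →
          ∃ c1 c2 : k, ∀ w : Wbar,
            lam ![u', u'', w] = c1 * mu ![u', w] + c2 * mu ![u'', w])} := by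
  -- bilinearity of xi in the first two arguments
  have K1 : ∀ (u1 u2 : k × Wbar) (a b c d : k) (w : k × Wbar),
      xi (a•u1 + b•u2) (c•u1 + d•u2) w =
        a*c * xi u1 u1 w + a*d * xi u1 u2 w + b*c * xi u2 u1 w + b*d * xi u2 u2 w := by
    intro u1 u2 a b c d w
    simp only [hxi, Prod.fst_add, Prod.snd_add, Prod.smul_fst, Prod.smul_snd, smul_eq_mul]
    rw [lam_lin0, lam_lin1, lam_lin1, mu_lin0, mu_lin0, mu_lin0, mu_lin1, mu_lin1]
    ring
  -- xi vanishes on equal first two arguments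
  have K2 : ∀ (u w : k × Wbar), xi u u w = 0 := by
    intro u w
    rw [hxi, lam_alt01, mu_alt]
    ring
  -- antisymmetry
  have K3 : ∀ (u1 u2 w : k × Wbar), xi u2 u1 w = -(xi u1 u2 w) := by
    intro u1 u2 w
    have h := K1 u1 u2 1 1 1 1 w
    simp only [one_smul, one_mul, K2] at h
    linear_combination -h
  -- annihilation extends to the span
  have K4 : ∀ (u1 u2 : k × Wbar), (∀ w, xi u1 u2 w = 0) →
      ∀ u ∈ Submodule.span k {u1, u2}, ∀ u' ∈ Submodule.span k {u1, u2},
        ∀ w, xi u u' w = 0 := by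
    intro u1 u2 h12 u hu u' hu' w
    obtain ⟨a, b, rfl⟩ := Submodule.mem_span_pair.1 hu
    obtain ⟨c, d, rfl⟩ := Submodule.mem_span_pair.1 hu'
    rw [K1, K2, K2]
    have h3 := K3 u1 u2 w
    rw [h12 w] at h3
    rw [h12 w, h3]
    ring
  -- linear independence of the mu-forms
  have K5 : ∀ (v1 v2 : Wbar), LinearIndependent k ![v1, v2] →
      ∀ c d : k, (∀ x, c * mu ![v2, x] = d * mu ![v1, x]) → c = 0 ∧ d = 0 := by
    intro v1 v2 hli c d h
    have hv : (-d)•v1 + c•v2 = 0 := by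
      apply hmund
      intro x
      have := mu_lin0 mu (-d) c v1 v2 x
      rw [this, h x]
      ring
    obtain ⟨hd0, hc0⟩ := LinearIndependent.pair_iff.1 hli (-d) c hv
    exact ⟨hc0, neg_eq_zero.1 hd0⟩
  -- key fact: pure first-coordinate vectors in an annihilated 2-plane vanish
  have F0 : ∀ U2 : Submodule k (k × Wbar), finrank k U2 = 2 →
      (∀ u ∈ U2, ∀ u' ∈ U2, ∀ w, xi u u' w = 0) →
      ∀ t : k, ((t, (0:Wbar)) ∈ U2) → t = 0 := by
    intro U2 hd hann t ht
    by_contra htne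
    have hz : ∀ u' ∈ U2, (u' : k × Wbar).2 = 0 := by
      intro u' hu'
      apply hmund
      intro x
      have h := hann (t, 0) ht u' hu' (0, x)
      rw [hxi] at h
      simp only at h
      rw [lam_zero0, mu_zero0, mu_zero0] at h
      have : t * mu ![u'.2, x] = 0 := by linear_combination h
      exact (mul_eq_zero.1 this).resolve_left htne
    have hle : U2 ≤ Submodule.span k {((t, (0:Wbar)) : k × Wbar)} := by
      intro u hu
      have h2 : u = (u.1 * t⁻¹) • ((t, (0:Wbar)) : k × Wbar) := by
        have := hz u hu
        ext
        · simp [mul_assoc, inv_mul_cancel₀ htne]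
        · simp [this]
      rw [h2]
      exact Submodule.smul_mem _ _ (Submodule.mem_span_singleton_self _)
    have hne : ((t, (0:Wbar)) : k × Wbar) ≠ 0 := by
      simp [Prod.ext_iff, htne]
    have h1 : finrank k U2 ≤ 1 := by
      calc finrank k U2 ≤ finrank k (Submodule.span k {((t, (0:Wbar)) : k × Wbar)}) :=
            Submodule.finrank_mono hle
        _ = 1 := finrank_span_singleton hne
    omega
  -- linear independence of projections
  have F1 : ∀ U2 : Submodule k (k × Wbar), finrank k U2 = 2 →
      (∀ u ∈ U2, ∀ u' ∈ U2, ∀ w, xi u u' w = 0) →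
      ∀ u1 u2 : k × Wbar, u1 ∈ U2 → u2 ∈ U2 → LinearIndependent k ![u1, u2] →
      LinearIndependent k ![u1.2, u2.2] := by
    intro U2 hd hann u1 u2 h1 h2 hli
    rw [LinearIndependent.pair_iff]
    intro s t hst
    have hmem : s • u1 + t • u2 ∈ U2 := U2.add_mem (U2.smul_mem s h1) (U2.smul_mem t h2)
    have hsnd : (s • u1 + t • u2).2 = 0 := by
      simp only [Prod.snd_add, Prod.smul_snd]
      exact hst
    have heq : s • u1 + t • u2 = ((s • u1 + t • u2).1, (0:Wbar)) := by
      ext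
      · rfl
      · exact hsnd
    have hfst : (s • u1 + t • u2).1 = 0 := by
      apply F0 U2 hd hann
      rw [← heq]
      exact hmem
    have hzero : s • u1 + t • u2 = 0 := by
      rw [heq, hfst]
      rfl
    exact LinearIndependent.pair_iff.1 hli s t hzero
  constructor
  · -- MapsTo
    rintro U2 ⟨hd, hann⟩
    obtain ⟨u1, u2, h1, h2, hli, hspan⟩ := exists_basis_two U2 hd
    have hliv := F1 U2 hd hann u1 u2 h1 h2 hli
    have hmap : Submodule.map (LinearMap.snd k k Wbar) U2 = Submodule.span k {u1.2, u2.2} := by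
      rw [hspan, Submodule.map_span]
      congr 1
      simp [Set.image_insert_eq]
    refine ⟨?_, ?_, ?_⟩
    · show finrank k (Submodule.map (LinearMap.snd k k Wbar) U2) = 2
      rw [hmap]; exact finrank_span_pair hliv
    · rintro v ⟨x, hx, rfl⟩ v' ⟨y, hy, rfl⟩
      have h := hann x hx y hy (1, (0:Wbar))
      rw [hxi] at h
      simp only at h
      rw [lam_zero2, mu_zero1, mu_zero1] at h
      simp only [LinearMap.snd_apply]
      linear_combination h
    · rintro v' v'' ⟨x, hx, rfl⟩ ⟨y, hy, rfl⟩ hliv'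
      refine ⟨y.1, -x.1, fun w => ?_⟩
      have h := hann x hx y hy (0, w)
      rw [hxi] at h
      simp only [LinearMap.snd_apply] at h ⊢
      linear_combination h
  constructor
  · -- InjOn
    rintro U2 ⟨hd, hann⟩ U2' ⟨hd', hann'⟩ himg
    simp only at himg
    obtain ⟨u1, u2, h1, h2, hli, hspan⟩ := exists_basis_two U2 hd
    have hliv := F1 U2 hd hann u1 u2 h1 h2 hli
    have hv1 : u1.2 ∈ Submodule.map (LinearMap.snd k k Wbar) U2' := by
      rw [← himg]; exact ⟨u1, h1, rfl⟩
    have hv2 : u2.2 ∈ Submodule.map (LinearMap.snd k k Wbar) U2' := by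
      rw [← himg]; exact ⟨u2, h2, rfl⟩
    obtain ⟨x, hx, hx2⟩ := hv1
    obtain ⟨y, hy, hy2⟩ := hv2
    simp only [LinearMap.snd_apply] at hx2 hy2
    -- from both annihilation conditions deduce x = u1, y = u2
    have key : ∀ t : Wbar,
        (u1.1 - x.1) * mu ![u2.2, t] = (u2.1 - y.1) * mu ![u1.2, t] := by
      intro t
      have hA := hann u1 h1 u2 h2 (0, t)
      have hB := hann' x hx y hy (0, t)
      rw [hxi] at hA hB
      rw [hx2, hy2] at hB
      simp only at hA hB
      linear_combination hA - hB
    obtain ⟨hc, hdd⟩ := K5 u1.2 u2.2 hliv _ _ key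
    have hxu : x = u1 := by
      ext
      · exact (sub_eq_zero.1 hc).symm
      · exact hx2
    have hyu : y = u2 := by
      ext
      · exact (sub_eq_zero.1 hdd).symm
      · exact hy2
    have hle : U2 ≤ U2' := by
      rw [hspan, Submodule.span_le]
      rintro z (rfl | rfl)
      · rw [← hxu]; exact hx
      · rw [← hyu]; exact hy
    exact Submodule.eq_of_le_of_finrank_eq hle (by rw [hd, hd'])
  · -- SurjOn
    rintro V2 ⟨hd, hiso, hlam⟩
    obtain ⟨v1, v2, h1, h2, hli, hspan⟩ := exists_basis_two V2 hd
    obtain ⟨c1, c2, hc⟩ := hlam v1 v2 h1 h2 hli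
    set u1 : k × Wbar := (-c2, v1) with hu1
    set u2 : k × Wbar := (c1, v2) with hu2
    have hliu : LinearIndependent k ![u1, u2] := by
      rw [LinearIndependent.pair_iff]
      intro s t hst
      apply LinearIndependent.pair_iff.1 hli s t
      have := congrArg Prod.snd hst
      simpa using this
    have hxi12 : ∀ w, xi u1 u2 w = 0 := by
      intro w
      rw [hxi]
      have hmu12 : mu ![v1, v2] = 0 := hiso v1 h1 v2 h2
      simp only [hu1, hu2]
      rw [hc w.2, hmu12]
      ring
    refine ⟨Submodule.span k {u1, u2}, ⟨?_, ?_⟩, ?_⟩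
    · exact finrank_span_pair hliu
    · exact K4 u1 u2 hxi12
    · show Submodule.map (LinearMap.snd k k Wbar) (Submodule.span k {u1, u2}) = V2
      rw [Submodule.map_span, hspan]
      congr 1
      simp [Set.image_insert_eq, hu1, hu2]
end
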